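/- arXiv:0804.4693 — 9 statements merged into one kernel-verified Lean document; each statement's English description precedes it below -/
import Mathlib

section
/- Let H be a complex Hilbert space and let P : ℝ → B(H) be a family of bounded skew-adjoint operators (i.e. the adjoint of P(t) equals −P(t) for every t) such that t ↦ P(t) is differentiable in operator norm. Then there exists a family of unitary propagators U(t,s) ∈ B(H): each U(t,s) is unitary, U(s,s) = I, and for each fixed s the map t ↦ U(t,s) is differentiable in operator norm with derivative (d/dt)U(t,s) = P(t)U(t,s). Moreover, if H : ℝ → B(H) is differentiable in operator norm and satisfies the Lax equation (d/dt)H(t) = P(t)H(t) − H(t)P(t) for all t, then H(t) = U(t,s)H(s)U(t,s)⁻¹ for all s,t ∈ ℝ. -/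
open ContinuousLinearMap intervalIntegral MeasureTheory Filter
set_option synthInstance.maxHeartbeats 1000000
set_option maxHeartbeats 1000000
set_option linter.unusedSectionVars false

section PicardAux

variable {E : Type*} [NormedAddCommGroup E] [InnerProductSpace ℂ E] [CompleteSpace E]

/-- Picard iterates for the propagator equation `U' = P ∘ U`, `U s = 1`. -/
noncomputable def picA (P : ℝ → E →L[ℂ] E) (s : ℝ) : ℕ → ℝ → E →L[ℂ] E
  | 0 => fun _ => 1
  | n + 1 => fun t => ∫ τ in s..t, (P τ).comp (picA P s n τ)

theorem picA_cont_deriv (P : ℝ → E →L[ℂ] E) (s : ℝ) (hP : Continuous P) (n : ℕ) :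
    Continuous (picA P s n) ∧
      ∀ t, HasDerivAt (picA P s (n + 1)) ((P t).comp (picA P s n t)) t := by
  induction n with
  | zero =>
    refine ⟨continuous_const, fun t => ?_⟩
    have hc : Continuous fun τ => (P τ).comp (picA P s 0 τ) := hP.clm_comp continuous_const
    exact integral_hasDerivAt_right (hc.intervalIntegrable s t)
      (hc.stronglyMeasurableAtFilter _ _) hc.continuousAt
  | succ n ih =>
    have hcn : Continuous (picA P s (n + 1)) := by
      rw [continuous_iff_continuousAt]
      exact fun t => (ih.2 t).continuousAt
    refine ⟨hcn, fun t => ?_⟩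
    have hc : Continuous fun τ => (P τ).comp (picA P s (n + 1) τ) := hP.clm_comp hcn
    exact integral_hasDerivAt_right (hc.intervalIntegrable s t)
      (hc.stronglyMeasurableAtFilter _ _) hc.continuousAt

theorem abs_integral_abs_pow (n : ℕ) (s t : ℝ) :
    |∫ τ in s..t, |τ - s| ^ n| = |t - s| ^ (n + 1) / (n + 1) := by
  rcases le_total s t with h | h
  · have h1 : (∫ τ in s..t, |τ - s| ^ n) = ∫ τ in s..t, (τ - s) ^ n := by
      apply integral_congr
      intro τ hτ
      rw [Set.uIcc_of_le h] at hτ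
      simp [abs_of_nonneg (sub_nonneg.mpr hτ.1)]
    rw [h1, integral_comp_sub_right (fun u => u ^ n) s, integral_pow, sub_self,
      zero_pow (Nat.succ_ne_zero n), sub_zero, abs_of_nonneg (sub_nonneg.mpr h),
      abs_of_nonneg (div_nonneg (pow_nonneg (sub_nonneg.mpr h) _) (by positivity))]
  · have h1 : (∫ τ in s..t, |τ - s| ^ n) = -∫ τ in t..s, (s - τ) ^ n := by
      rw [← integral_symm]
      apply integral_congr
      intro τ hτ
      rw [Set.uIcc_comm, Set.uIcc_of_le h] at hτ
      show |τ - s| ^ n = (s - τ) ^ n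
      rw [abs_of_nonpos (sub_nonpos.mpr hτ.2)]
      ring_nf
    rw [h1, integral_comp_sub_left (fun u => u ^ n) s, integral_pow, sub_self,
      zero_pow (Nat.succ_ne_zero n), sub_zero, abs_neg, abs_sub_comm t s,
      abs_of_nonneg (sub_nonneg.mpr h),
      abs_of_nonneg (div_nonneg (pow_nonneg (sub_nonneg.mpr h) _) (by positivity))]

theorem picA_norm_le (P : ℝ → E →L[ℂ] E) (s : ℝ) {M r : ℝ} (hM0 : 0 ≤ M)
    (hM : ∀ τ, |τ - s| ≤ r → ‖P τ‖ ≤ M) :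
    ∀ n, ∀ t, |t - s| ≤ r → ‖picA P s n t‖ ≤ M ^ n * |t - s| ^ n / n.factorial := by
  intro n
  induction n with
  | zero => intro t _; simp only [pow_zero, Nat.factorial_zero, Nat.cast_one, mul_one, div_one]; exact norm_id_le
  | succ n ih =>
    intro t ht
    have habs : ∀ τ, τ ∈ Set.uIcc s t → |τ - s| ≤ r := by
      intro τ hτ
      refine le_trans ?_ ht
      rcases Set.mem_uIcc.mp hτ with h | h
      · rw [abs_sub_le_iff]
        refine ⟨le_trans (by linarith [h.2]) (le_abs_self _), ?_⟩
        calc s - τ ≤ 0 := by linarith [h.1]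
          _ ≤ |t - s| := abs_nonneg _
      · rw [abs_sub_le_iff]
        refine ⟨le_trans (by linarith [h.2]) (abs_nonneg _), ?_⟩
        calc s - τ ≤ s - t := by linarith [h.1]
          _ ≤ |s - t| := le_abs_self _
          _ = |t - s| := abs_sub_comm s t
    set c : ℝ := M ^ (n + 1) / n.factorial with hc
    have hc0 : 0 ≤ c := by positivity
    have hbound : ∀ τ ∈ Set.uIoc s t,
        ‖(P τ).comp (picA P s n τ)‖ ≤ c * |τ - s| ^ n := by
      intro τ hτ
      have hτ' : τ ∈ Set.uIcc s t := Set.Ioc_subset_Icc_self hτ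
      calc ‖(P τ).comp (picA P s n τ)‖ ≤ ‖P τ‖ * ‖picA P s n τ‖ := opNorm_comp_le _ _
        _ ≤ M * (M ^ n * |τ - s| ^ n / n.factorial) :=
            mul_le_mul (hM τ (habs τ hτ')) (ih τ (habs τ hτ')) (norm_nonneg _) hM0
        _ = c * |τ - s| ^ n := by rw [hc]; ring
    have hgint : IntervalIntegrable (fun τ => c * |τ - s| ^ n) volume s t := by
      apply Continuous.intervalIntegrable
      fun_prop
    have h1 : ‖picA P s (n + 1) t‖ ≤ |∫ τ in s..t, c * |τ - s| ^ n| := by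
      show ‖(∫ τ in s..t, (P τ).comp (picA P s n τ))‖ ≤ _
      exact intervalIntegral.norm_integral_le_abs_of_norm_le
        (ae_restrict_of_forall_mem measurableSet_uIoc hbound) hgint
    have h2 : |∫ τ in s..t, c * |τ - s| ^ n| = c * (|t - s| ^ (n+1) / (n+1)) := by
      rw [intervalIntegral.integral_const_mul, abs_mul, abs_of_nonneg hc0, abs_integral_abs_pow]
    refine (h1.trans_eq h2).trans_eq ?_
    have hfac : (0:ℝ) < n.factorial := by positivity
    rw [hc, Nat.factorial_succ]
    rw [div_mul_div_comm, div_eq_div_iff (by positivity) (by positivity)]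
    push_cast
    ring

/-- bound for `‖P‖` on `|τ - s| ≤ r` -/
theorem exists_P_bound (P : ℝ → E →L[ℂ] E) (hP : Continuous P) (s r : ℝ) :
    ∃ M : ℝ, 0 ≤ M ∧ ∀ τ, |τ - s| ≤ r → ‖P τ‖ ≤ M := by
  obtain ⟨C, hC⟩ := (isCompact_Icc (a := s - r) (b := s + r)).exists_bound_of_continuousOn
    hP.continuousOn
  refine ⟨max C 0, le_max_right _ _, fun τ hτ => ?_⟩
  have : τ ∈ Set.Icc (s - r) (s + r) := by
    rw [abs_sub_le_iff] at hτ
    constructor <;> linarith [hτ.1, hτ.2]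
  exact (hC τ this).trans (le_max_left _ _)

/-- The unitary propagator, as sum of the Picard/Dyson series. -/
noncomputable def picU (P : ℝ → E →L[ℂ] E) (s t : ℝ) : E →L[ℂ] E := ∑' n, picA P s n t

theorem picA_summable (P : ℝ → E →L[ℂ] E) (hP : Continuous P) (s t : ℝ) :
    Summable fun n => picA P s n t := by
  obtain ⟨M, hM0, hM⟩ := exists_P_bound P hP s |t - s|
  apply Summable.of_norm_bounded ((Real.summable_pow_div_factorial (M * |t - s|)).congr
    fun n => by rw [mul_pow])
  intro n
  simpa using picA_norm_le P s hM0 hM n t le_rfl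

theorem picU_self (P : ℝ → E →L[ℂ] E) (s : ℝ) : picU P s s = 1 := by
  have h : ∀ n, picA P s n s = if n = 0 then 1 else 0 := by
    intro n
    cases n with
    | zero => rfl
    | succ n => simp [picA]
  rw [picU, tsum_eq_single 0 (by intro n hn; rw [h n, if_neg hn]), h 0, if_pos rfl]

theorem picU_hasDerivAt (P : ℝ → E →L[ℂ] E) (hP : Continuous P) (s t : ℝ) :
    HasDerivAt (picU P s) ((P t).comp (picU P s t)) t := by
  classical
  set r : ℝ := |t - s| + 1 with hr
  obtain ⟨M, hM0, hM⟩ := exists_P_bound P hP s r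
  set Sset : Set ℝ := Set.Ioo (t - 1) (t + 1) with hS
  have hSopen : IsOpen Sset := isOpen_Ioo
  have htS : t ∈ Sset := by constructor <;> simp [hS] <;> linarith
  have hxr : ∀ x ∈ Sset, |x - s| ≤ r := by
    intro x hx
    have : |x - t| ≤ 1 := by
      rw [abs_sub_le_iff]; constructor <;> [linarith [hx.2]; linarith [hx.1]]
    calc |x - s| ≤ |x - t| + |t - s| := abs_sub_le x t s
      _ ≤ 1 + |t - s| := by linarith
      _ = r := by rw [hr]; ring
  set u : ℕ → ℝ := fun n => M * ((M * r) ^ n / n.factorial) with hu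
  have husum : Summable u := (Real.summable_pow_div_factorial (M * r)).mul_left M
  have hr0 : 0 ≤ r := by rw [hr]; positivity
  have hDbound : ∀ n, ∀ x ∈ Sset, ‖(P x).comp (picA P s n x)‖ ≤ u n := by
    intro n x hx
    calc ‖(P x).comp (picA P s n x)‖ ≤ ‖P x‖ * ‖picA P s n x‖ := opNorm_comp_le _ _
      _ ≤ M * (M ^ n * |x - s| ^ n / n.factorial) := by
          apply mul_le_mul (hM x (hxr x hx)) (picA_norm_le P s hM0 hM n x (hxr x hx))
            (norm_nonneg _) hM0
      _ ≤ u n := by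
          rw [hu]
          show _ ≤ M * ((M * r) ^ n / n.factorial)
          rw [mul_pow]
          have h2 : M ^ n * |x - s| ^ n / (n.factorial : ℝ) ≤ M ^ n * r ^ n / n.factorial := by
            have h3 : M ^ n * |x - s| ^ n ≤ M ^ n * r ^ n :=
              mul_le_mul_of_nonneg_left (pow_le_pow_left₀ (abs_nonneg _) (hxr x hx) n)
                (pow_nonneg hM0 n)
            rw [div_eq_mul_inv, div_eq_mul_inv]
            exact mul_le_mul_of_nonneg_right h3 (by positivity)
          exact mul_le_mul_of_nonneg_left h2 hM0
  set g : ℝ → E →L[ℂ] E := fun x => ∑' n, picA P s (n + 1) x with hg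
  have hsum : ∀ x, Summable fun n => picA P s n x := picA_summable P hP s
  have hshift : ∀ x, Summable fun n => picA P s (n + 1) x := fun x =>
    (summable_nat_add_iff 1).mpr (hsum x)
  have hgderiv : HasDerivAt g (∑' n, (P t).comp (picA P s n t)) t := by
    refine hasDerivAt_of_tendstoUniformlyOn hSopen
      (f := fun (N : ℕ) x => ∑ n ∈ Finset.range N, picA P s (n + 1) x)
      (tendstoUniformlyOn_tsum_nat husum hDbound) ?_ ?_ htS
    · filter_upwards with N x hx
      exact HasDerivAt.fun_sum fun n _ => (picA_cont_deriv P s hP n).2 x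
    · intro x hx
      exact (hshift x).hasSum.tendsto_sum_nat
  have hU1 : picU P s = fun x => picA P s 0 x + g x := by
    funext x
    rw [picU, Summable.tsum_eq_zero_add (hsum x)]
  have hfin : HasDerivAt (picU P s) (0 + ∑' n, (P t).comp (picA P s n t)) t := by
    rw [hU1]
    exact (hasDerivAt_const t _).add hgderiv
  rw [zero_add] at hfin
  convert hfin using 1
  have hmap := (compL ℂ E E E (P t)).map_tsum (hsum t)
  simpa [picU] using hmap

/-- Uniqueness: a solution of the commutator (Lax-type) linear ODE with value `1` at `s`
is identically `1`. -/
theorem comm_sol_eq_one {P : ℝ → E →L[ℂ] E} (hP : Continuous P) {W : ℝ → E →L[ℂ] E}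
    (hW : ∀ t, HasDerivAt W (P t * W t - W t * P t) t) {s : ℝ} (hWs : W s = 1) (t : ℝ) :
    W t = 1 := by
  set a : ℝ := min s t - 1 with ha
  set b : ℝ := max s t + 1 with hb
  have hab : a ≤ b := by
    have := min_le_max (a := s) (b := t); rw [ha, hb]; linarith
  set c : ℝ → ℝ := fun τ => min (max τ a) b with hc
  have hcmem : ∀ τ, c τ ∈ Set.Icc a b := by
    intro τ
    constructor
    · exact le_min (le_max_right _ _) hab
    · exact min_le_right _ _
  have hceq : ∀ τ ∈ Set.Icc a b, c τ = τ := by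
    intro τ hτ
    rw [hc]
    simp only [max_eq_left hτ.1, min_eq_left hτ.2]
  obtain ⟨C, hC⟩ := (isCompact_Icc (a := a) (b := b)).exists_bound_of_continuousOn hP.continuousOn
  have hC0 : 0 ≤ max C 0 := le_max_right _ _
  have hPc : ∀ τ, ‖P (c τ)‖ ≤ max C 0 := fun τ => (hC _ (hcmem τ)).trans (le_max_left _ _)
  set K : NNReal := (2 * max C 0).toNNReal with hK
  have hKval : (K : ℝ) = 2 * max C 0 := Real.coe_toNNReal _ (by positivity)
  set v : ℝ → (E →L[ℂ] E) → (E →L[ℂ] E) := fun τ X => P (c τ) * X - X * P (c τ) with hv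
  have hlip : ∀ τ, LipschitzOnWith K (v τ) Set.univ := by
    intro τ
    apply LipschitzWith.lipschitzOnWith
    apply LipschitzWith.of_dist_le_mul
    intro X Y
    rw [dist_eq_norm, dist_eq_norm, hKval]
    have hXY : v τ X - v τ Y = P (c τ) * (X - Y) - (X - Y) * P (c τ) := by
      show P (c τ) * X - X * P (c τ) - (P (c τ) * Y - Y * P (c τ)) = _
      noncomm_ring
    rw [hXY]
    calc ‖P (c τ) * (X - Y) - (X - Y) * P (c τ)‖
        ≤ ‖P (c τ) * (X - Y)‖ + ‖(X - Y) * P (c τ)‖ := norm_sub_le _ _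
      _ ≤ ‖P (c τ)‖ * ‖X - Y‖ + ‖X - Y‖ * ‖P (c τ)‖ := by
          gcongr <;> exact norm_mul_le _ _
      _ ≤ max C 0 * ‖X - Y‖ + ‖X - Y‖ * max C 0 := by
          gcongr <;> [exact hPc τ; exact hPc τ]
      _ = 2 * max C 0 * ‖X - Y‖ := by ring
  have hWcont : Continuous W := by
    rw [continuous_iff_continuousAt]; exact fun τ => (hW τ).continuousAt
  have hsab : s ∈ Set.Ioo a b := by
    constructor <;> [rw [ha]; rw [hb]] <;>
      [linarith [min_le_left s t]; linarith [le_max_left s t]]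
  have htab : t ∈ Set.Icc a b := by
    constructor <;> [rw [ha]; rw [hb]] <;>
      [linarith [min_le_right s t]; linarith [le_max_right s t]]
  have heq := ODE_solution_unique_of_mem_Icc (v := v) (s := fun _ => (Set.univ : Set (E →L[ℂ] E)))
    (fun τ _ => hlip τ) hsab hWcont.continuousOn
    (fun τ hτ => by
      have h := hW τ
      show HasDerivAt W (P (c τ) * W τ - W τ * P (c τ)) τ
      rw [hceq τ (Set.Ioo_subset_Icc_self hτ)]
      exact h)
    (fun _ _ => Set.mem_univ _)
    continuousOn_const
    (fun τ hτ => by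
      show HasDerivAt (fun _ => (1 : E →L[ℂ] E)) (P (c τ) * 1 - 1 * P (c τ)) τ
      simpa using hasDerivAt_const τ (1 : E →L[ℂ] E))
    (fun _ _ => Set.mem_univ _)
    (by simpa using hWs)
  simpa using heq htab

/-- Derivative-zero functions into a normed space are constant. -/
theorem const_of_hasDerivAt_zero {F : Type*} [NormedAddCommGroup F] [NormedSpace ℝ F]
    {f : ℝ → F} (hf : ∀ t, HasDerivAt f 0 t) (x y : ℝ) : f x = f y :=
  is_const_of_deriv_eq_zero (fun t => (hf t).differentiableAt) (fun t => (hf t).deriv) x y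

end PicardAux

/-- For a differentiable family of bounded skew-adjoint operators `P t` there exists a family
of unitary propagators `U t s` with `U s s = 1` and `d/dt U t s = P t ∘ U t s`, and any
norm-differentiable family `H t` satisfying the Lax equation
`d/dt H t = P t ∘ H t - H t ∘ P t` satisfies `H t = U t s ∘ H s ∘ (U t s)⁻¹`. -/
theorem stmt_0 {E : Type*} [NormedAddCommGroup E] [InnerProductSpace ℂ E] [CompleteSpace E]
    (P : ℝ → E →L[ℂ] E)
    (hskew : ∀ t, adjoint (P t) = -P t)
    (hPdiff : Differentiable ℝ P) :
    ∃ U : ℝ → ℝ → E →L[ℂ] E,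
      (∀ t s : ℝ, U t s ∈ unitary (E →L[ℂ] E)) ∧
      (∀ s : ℝ, U s s = 1) ∧
      (∀ s t : ℝ, HasDerivAt (fun τ => U τ s) (P t ∘L U t s) t) ∧
      (∀ H : ℝ → E →L[ℂ] E,
        (∀ t, HasDerivAt H (P t ∘L H t - H t ∘L P t) t) →
        ∀ s t : ℝ, H t = U t s ∘L H s ∘L star (U t s)) := by
  have hP : Continuous P := hPdiff.continuous
  have hstarP : ∀ t, star (P t) = -P t := fun t => by rw [star_eq_adjoint, hskew t]
  have hU : ∀ s t : ℝ, HasDerivAt (fun τ => picU P s τ) (P t * picU P s t) t :=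
    fun s t => picU_hasDerivAt P hP s t
  have hUstar : ∀ s t : ℝ, HasDerivAt (fun τ => star (picU P s τ))
      (-(star (picU P s t) * P t)) t := by
    intro s t
    have h := (hU s t).star
    have he : star (P t * picU P s t) = -(star (picU P s t) * P t) := by
      rw [star_mul, hstarP t, mul_neg]
    rwa [he] at h
  have hleft : ∀ s t : ℝ, star (picU P s t) * picU P s t = 1 := by
    intro s t
    have hZ : ∀ τ, HasDerivAt (fun τ => star (picU P s τ) * picU P s τ) 0 τ := by
      intro τ
      have h := (hUstar s τ).mul (hU s τ)
      exact h.congr_deriv (by noncomm_ring)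
    have hc := const_of_hasDerivAt_zero hZ t s
    rw [hc, picU_self, star_one, one_mul]
  have hright : ∀ s t : ℝ, picU P s t * star (picU P s t) = 1 := by
    intro s t
    have hW : ∀ τ, HasDerivAt (fun τ => picU P s τ * star (picU P s τ))
        (P τ * (picU P s τ * star (picU P s τ)) -
          (picU P s τ * star (picU P s τ)) * P τ) τ := by
      intro τ
      have h := (hU s τ).mul (hUstar s τ)
      exact h.congr_deriv (by noncomm_ring)
    have hWs : picU P s s * star (picU P s s) = 1 := by
      rw [picU_self, star_one, one_mul]
    exact comm_sol_eq_one hP hW hWs t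
  refine ⟨fun t s => picU P s t,
    fun t s => Unitary.mem_iff.mpr ⟨hleft s t, hright s t⟩,
    fun s => picU_self P s,
    fun s t => picU_hasDerivAt P hP s t, ?_⟩
  intro H hH s t
  have hHm : ∀ τ, HasDerivAt H (P τ * H τ - H τ * P τ) τ := hH
  have hK : ∀ τ, HasDerivAt
      (fun τ => star (picU P s τ) * H τ * picU P s τ) 0 τ := by
    intro τ
    have h := ((hUstar s τ).mul (hHm τ)).mul (hU s τ)
    exact h.congr_deriv (by simp only [Pi.mul_apply]; noncomm_ring)
  have hKconst := const_of_hasDerivAt_zero hK t s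
  rw [picU_self, star_one, one_mul, mul_one] at hKconst
  show H t = picU P s t * (H s * star (picU P s t))
  rw [← hKconst]
  calc H t = (picU P s t * star (picU P s t)) * H t *
        (picU P s t * star (picU P s t)) := by rw [hright s t]; simp
    _ = picU P s t * (star (picU P s t) * H t * picU P s t * star (picU P s t)) := by
        noncomm_ring
end

section
/- Let a, b : ℝ → (ℤ → ℝ) be curves of bounded real sequences that are differentiable as curves in the Banach space of bounded sequences with the supremum norm. For each t let H(t) be the Jacobi operator on ℓ²(ℤ,ℂ) with coefficients a(·,t), b(·,t), and let P(t) be the bounded operator (P(t)f)(n) = a(n,t)f(n+1) − a(n−1,t)f(n−1). Then the Lax equation (d/dt)H(t) = P(t)H(t) − H(t)P(t) (derivative in operator norm) holds for all t ∈ ℝ if and only if a, b satisfy the Toda lattice in Flaschka's variables, i.e. ȧ(n,t) = a(n,t)(b(n+1,t) − b(n,t)) and ḃ(n,t) = 2(a(n,t)² − a(n−1,t)²) for all (n,t) ∈ ℤ × ℝ. -/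
open scoped BoundedContinuousFunction
open ContinuousLinearMap
open scoped ENNReal

namespace TodaAux
noncomputable section

abbrev Z2 : Type := lp (fun _ : ℤ => ℂ) 2

lemma Z2.norm_term_le (c : ℤ →ᵇ ℝ) (e : ℤ ≃ ℤ) (f : Z2) (n : ℤ) :
    ‖(c n : ℂ) * f (e n)‖ ≤ ‖c‖ * ‖f (e n)‖ := by
  rw [norm_mul, Complex.norm_real]
  gcongr
  exact c.norm_coe_le_norm n

lemma Z2.memℓp_term (c : ℤ →ᵇ ℝ) (e : ℤ ≃ ℤ) (f : Z2) :
    Memℓp (fun n => (c n : ℂ) * f (e n)) 2 := by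
  apply memℓp_gen
  have hs : Summable fun n : ℤ => ‖f n‖ ^ (2 : ℝ≥0∞).toReal :=
    (lp.memℓp f).summable (by norm_num)
  have hs' : Summable fun n : ℤ => ‖f (e n)‖ ^ (2 : ℝ≥0∞).toReal := by
    exact (e.summable_iff (f := fun m : ℤ => ‖f m‖ ^ (2 : ℝ≥0∞).toReal)).2 hs
  refine Summable.of_nonneg_of_le (fun n => by positivity) (fun n => ?_)
    (hs'.mul_left (‖c‖ ^ (2 : ℝ≥0∞).toReal))
  calc ‖(c n : ℂ) * f (e n)‖ ^ (2 : ℝ≥0∞).toReal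
      ≤ (‖c‖ * ‖f (e n)‖) ^ (2 : ℝ≥0∞).toReal := by
        apply Real.rpow_le_rpow (norm_nonneg _) (Z2.norm_term_le c e f n) (by norm_num)
    _ = ‖c‖ ^ (2 : ℝ≥0∞).toReal * ‖f (e n)‖ ^ (2 : ℝ≥0∞).toReal :=
        Real.mul_rpow (norm_nonneg _) (norm_nonneg _)

lemma Z2.norm_op_le (c : ℤ →ᵇ ℝ) (e : ℤ ≃ ℤ) (f : Z2) :
    ‖(⟨fun n => (c n : ℂ) * f (e n), Z2.memℓp_term c e f⟩ : Z2)‖ ≤ ‖c‖ * ‖f‖ := by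
  apply lp.norm_le_of_forall_sum_le (by norm_num) (by positivity)
  intro s
  have key : ∀ n : ℤ, ‖(c n : ℂ) * f (e n)‖ ^ (2 : ℝ≥0∞).toReal
      ≤ ‖c‖ ^ (2 : ℝ≥0∞).toReal * ‖f (e n)‖ ^ (2 : ℝ≥0∞).toReal := fun n => by
    calc ‖(c n : ℂ) * f (e n)‖ ^ (2 : ℝ≥0∞).toReal
        ≤ (‖c‖ * ‖f (e n)‖) ^ (2 : ℝ≥0∞).toReal :=
          Real.rpow_le_rpow (norm_nonneg _) (Z2.norm_term_le c e f n) (by norm_num)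
      _ = _ := Real.mul_rpow (norm_nonneg _) (norm_nonneg _)
  calc ∑ n ∈ s, ‖(⟨fun n => (c n : ℂ) * f (e n), Z2.memℓp_term c e f⟩ : Z2) n‖ ^ (2 : ℝ≥0∞).toReal
      = ∑ n ∈ s, ‖(c n : ℂ) * f (e n)‖ ^ (2 : ℝ≥0∞).toReal := rfl
    _ ≤ ∑ n ∈ s, ‖c‖ ^ (2 : ℝ≥0∞).toReal * ‖f (e n)‖ ^ (2 : ℝ≥0∞).toReal :=
        Finset.sum_le_sum fun n _ => key n
    _ = ‖c‖ ^ (2 : ℝ≥0∞).toReal * ∑ n ∈ s, ‖f (e n)‖ ^ (2 : ℝ≥0∞).toReal := by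
        rw [Finset.mul_sum]
    _ = ‖c‖ ^ (2 : ℝ≥0∞).toReal * ∑ m ∈ s.map e.toEmbedding, ‖f m‖ ^ (2 : ℝ≥0∞).toReal := by
        rw [Finset.sum_map]
        rfl
    _ ≤ ‖c‖ ^ (2 : ℝ≥0∞).toReal * ‖f‖ ^ (2 : ℝ≥0∞).toReal := by
        have h0 : (0:ℝ) ≤ ‖c‖ ^ (2 : ℝ≥0∞).toReal := by positivity
        exact mul_le_mul_of_nonneg_left
          (lp.sum_rpow_le_norm_rpow (by norm_num) f (s.map e.toEmbedding)) h0
    _ = (‖c‖ * ‖f‖) ^ (2 : ℝ≥0∞).toReal :=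
        (Real.mul_rpow (norm_nonneg _) (norm_nonneg _)).symm

/-- The operator `f ↦ (n ↦ c n * f (e n))`. -/
def opL (c : ℤ →ᵇ ℝ) (e : ℤ ≃ ℤ) : Z2 →L[ℂ] Z2 :=
  LinearMap.mkContinuous
    { toFun := fun f => (⟨fun n => (c n : ℂ) * f (e n), Z2.memℓp_term c e f⟩ : Z2)
      map_add' := fun f g => by
        apply lp.ext
        funext n
        simp [lp.coeFn_add, mul_add]
        rfl
      map_smul' := fun z f => by
        apply lp.ext
        funext n
        simp [lp.coeFn_smul]
        ring }
    ‖c‖ (Z2.norm_op_le c e)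

lemma opL_apply (c : ℤ →ᵇ ℝ) (e : ℤ ≃ ℤ) (f : Z2) (n : ℤ) :
    opL c e f n = (c n : ℂ) * f (e n) := rfl

lemma opL_norm_le (c : ℤ →ᵇ ℝ) (e : ℤ ≃ ℤ) : ‖opL c e‖ ≤ ‖c‖ :=
  LinearMap.mkContinuous_norm_le _ (norm_nonneg c) _

/-- Shift of a bounded sequence: `sh c n = c (n-1)`. -/
def sh (c : ℤ →ᵇ ℝ) : ℤ →ᵇ ℝ :=
  c.compContinuous ⟨fun n => n - 1, continuous_of_discreteTopology⟩

lemma sh_apply (c : ℤ →ᵇ ℝ) (n : ℤ) : sh c n = c (n - 1) := rfl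

lemma sh_norm_le (c : ℤ →ᵇ ℝ) : ‖sh c‖ ≤ ‖c‖ :=
  BoundedContinuousFunction.norm_compContinuous_le c _

/-- The Jacobi operator with coefficients `u, v`. -/
def Jfun (u v : ℤ →ᵇ ℝ) : Z2 →L[ℂ] Z2 :=
  opL u (Equiv.addRight 1) + opL (sh u) (Equiv.subRight 1) + opL v (Equiv.refl ℤ)

lemma Jfun_apply (u v : ℤ →ᵇ ℝ) (f : Z2) (n : ℤ) :
    Jfun u v f n = (u n : ℂ) * f (n + 1) + (u (n - 1) : ℂ) * f (n - 1) + (v n : ℂ) * f n := by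
  simp only [Jfun, ContinuousLinearMap.add_apply, lp.coeFn_add, Pi.add_apply,
    opL_apply, sh_apply, Equiv.coe_addRight, Equiv.subRight_apply, Equiv.refl_apply]

/-- The Jacobi operator as a continuous `ℝ`-linear map of the coefficients. -/
def J : ((ℤ →ᵇ ℝ) × (ℤ →ᵇ ℝ)) →L[ℝ] (Z2 →L[ℂ] Z2) :=
  LinearMap.mkContinuous
    { toFun := fun p => Jfun p.1 p.2
      map_add' := fun p q => by
        ext f n
        simp only [ContinuousLinearMap.add_apply, lp.coeFn_add, Pi.add_apply,
          Jfun_apply, Prod.fst_add, Prod.snd_add, BoundedContinuousFunction.coe_add]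
        push_cast
        ring
      map_smul' := fun r p => by
        ext f n
        simp only [Jfun_apply, Prod.smul_fst, Prod.smul_snd, RingHom.id_apply,
          ContinuousLinearMap.coe_smul', Pi.smul_apply, lp.coeFn_smul,
          BoundedContinuousFunction.coe_smul, smul_eq_mul, Complex.real_smul]
        push_cast
        ring }
    3
    (fun p => by
      have h1 : ‖Jfun p.1 p.2‖ ≤ ‖p.1‖ + ‖sh p.1‖ + ‖p.2‖ := by
        refine (norm_add_le _ _).trans ?_
        have := (norm_add_le (opL p.1 (Equiv.addRight 1)) (opL (sh p.1) (Equiv.subRight 1)))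
        have h2 := opL_norm_le p.1 (Equiv.addRight 1)
        have h3 := opL_norm_le (sh p.1) (Equiv.subRight 1)
        have h4 := opL_norm_le p.2 (Equiv.refl ℤ)
        calc ‖opL p.1 (Equiv.addRight 1) + opL (sh p.1) (Equiv.subRight 1)‖ + ‖opL p.2 (Equiv.refl ℤ)‖
            ≤ (‖opL p.1 (Equiv.addRight 1)‖ + ‖opL (sh p.1) (Equiv.subRight 1)‖) + ‖opL p.2 (Equiv.refl ℤ)‖ := by
              gcongr
          _ ≤ ‖p.1‖ + ‖sh p.1‖ + ‖p.2‖ := by gcongr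
      have h5 : ‖p.1‖ ≤ ‖p‖ := norm_fst_le p
      have h6 : ‖p.2‖ ≤ ‖p‖ := norm_snd_le p
      have h7 : ‖sh p.1‖ ≤ ‖p‖ := (sh_norm_le p.1).trans h5
      calc ‖Jfun p.1 p.2‖ ≤ ‖p.1‖ + ‖sh p.1‖ + ‖p.2‖ := h1
        _ ≤ ‖p‖ + ‖p‖ + ‖p‖ := by gcongr
        _ = 3 * ‖p‖ := by ring)

lemma J_apply (u v : ℤ →ᵇ ℝ) (f : Z2) (n : ℤ) :
    J (u, v) f n = (u n : ℂ) * f (n + 1) + (u (n - 1) : ℂ) * f (n - 1) + (v n : ℂ) * f n :=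
  Jfun_apply u v f n

/-- Coordinate evaluation on `ℓ²`. -/
def coord (n : ℤ) : Z2 →L[ℂ] ℂ :=
  LinearMap.mkContinuous
    { toFun := fun f => f n
      map_add' := fun f g => by simp [lp.coeFn_add]
      map_smul' := fun z f => by simp [lp.coeFn_smul] }
    1 (fun f => by rw [one_mul]; exact lp.norm_apply_le_norm (by norm_num) f n)

end
end TodaAux

set_option maxHeartbeats 1000000 in
/-- For curves of bounded sequences `a, b` which are differentiable in the sup norm, the Lax
equation `d/dt H(t) = P(t)H(t) − H(t)P(t)` (derivative in operator norm) for the associated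
Jacobi operators `H(t)` and the operators `P(t)` holds for all `t` if and only if `a, b`
satisfy the Toda lattice equations in Flaschka's variables. -/
theorem stmt_3 (a b : ℝ → (ℤ →ᵇ ℝ))
    (hadiff : Differentiable ℝ a) (hbdiff : Differentiable ℝ b)
    (H P : ℝ → (lp (fun _ : ℤ => ℂ) 2 →L[ℂ] lp (fun _ : ℤ => ℂ) 2))
    (hH : ∀ (t : ℝ) (f : lp (fun _ : ℤ => ℂ) 2) (n : ℤ),
      H t f n = (a t n : ℂ) * f (n + 1) + (a t (n - 1) : ℂ) * f (n - 1) + (b t n : ℂ) * f n)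
    (hP : ∀ (t : ℝ) (f : lp (fun _ : ℤ => ℂ) 2) (n : ℤ),
      P t f n = (a t n : ℂ) * f (n + 1) - (a t (n - 1) : ℂ) * f (n - 1)) :
    (∀ t : ℝ, HasDerivAt H (P t ∘L H t - H t ∘L P t) t) ↔
      (∀ (n : ℤ) (t : ℝ),
        HasDerivAt (fun τ => a τ n) (a t n * (b t (n + 1) - b t n)) t ∧
        HasDerivAt (fun τ => b τ n) (2 * ((a t n) ^ 2 - (a t (n - 1)) ^ 2)) t) := by
  -- the coordinates of the commutator
  have hcomm : ∀ (t : ℝ) (f : lp (fun _ : ℤ => ℂ) 2) (n : ℤ),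
      ((P t ∘L H t - H t ∘L P t) f) n =
        (a t n : ℂ) * ((b t (n + 1) : ℂ) - (b t n : ℂ)) * f (n + 1) +
        (a t (n - 1) : ℂ) * ((b t n : ℂ) - (b t (n - 1) : ℂ)) * f (n - 1) +
        2 * ((a t n : ℂ) ^ 2 - (a t (n - 1) : ℂ) ^ 2) * f n := by
    intro t f n
    have e1 : n + 1 - 1 = n := by ring
    have e2 : n - 1 + 1 = n := by ring
    have : ((P t ∘L H t - H t ∘L P t) f) n = P t (H t f) n - H t (P t f) n := by
      simp [ContinuousLinearMap.sub_apply, lp.coeFn_sub, Pi.sub_apply]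
    rw [this, hP t (H t f) n, hH t (P t f) n, hH t f (n + 1), hH t f (n - 1),
      hP t f (n + 1), hP t f (n - 1), hP t f n, e1, e2]
    ring
  constructor
  · -- Lax ⇒ Toda
    intro hLax n t
    constructor
    · -- equation for a
      set δ : lp (fun _ : ℤ => ℂ) 2 := lp.single 2 (n + 1) (1 : ℂ) with hδ
      have hδ1 : δ (n + 1) = 1 := lp.single_apply_self 2 (n + 1) 1
      have hδ2 : δ (n - 1) = 0 := lp.single_apply_ne 2 (n + 1) 1 (by omega)
      have hδ3 : δ n = 0 := lp.single_apply_ne 2 (n + 1) 1 (by omega)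
      set Φ : (lp (fun _ : ℤ => ℂ) 2 →L[ℂ] lp (fun _ : ℤ => ℂ) 2) →L[ℝ] ℂ :=
        (((TodaAux.coord n).comp (ContinuousLinearMap.apply ℂ _ δ)).restrictScalars ℝ) with hΦ
      have h1 : HasDerivAt (fun τ => Φ (H τ)) (Φ (P t ∘L H t - H t ∘L P t)) t :=
        Φ.hasFDerivAt.comp_hasDerivAt t (hLax t)
      have hfun : (fun τ => Φ (H τ)) = fun τ => ((a τ n : ℝ) : ℂ) := by
        funext τ
        have : Φ (H τ) = H τ δ n := rfl
        rw [this, hH τ δ n, hδ1, hδ2, hδ3]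
        ring
      have hval : Φ (P t ∘L H t - H t ∘L P t) =
          ((a t n * (b t (n + 1) - b t n) : ℝ) : ℂ) := by
        have : Φ (P t ∘L H t - H t ∘L P t) = ((P t ∘L H t - H t ∘L P t) δ) n := rfl
        rw [this, hcomm t δ n, hδ1, hδ2, hδ3]
        push_cast
        ring
      rw [hfun, hval] at h1
      have h2 := Complex.reCLM.hasFDerivAt.comp_hasDerivAt t h1
      simpa [Function.comp_def] using h2
    · -- equation for b
      set δ : lp (fun _ : ℤ => ℂ) 2 := lp.single 2 n (1 : ℂ) with hδ
      have hδ1 : δ (n + 1) = 0 := lp.single_apply_ne 2 n 1 (by omega)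
      have hδ2 : δ (n - 1) = 0 := lp.single_apply_ne 2 n 1 (by omega)
      have hδ3 : δ n = 1 := lp.single_apply_self 2 n 1
      set Φ : (lp (fun _ : ℤ => ℂ) 2 →L[ℂ] lp (fun _ : ℤ => ℂ) 2) →L[ℝ] ℂ :=
        (((TodaAux.coord n).comp (ContinuousLinearMap.apply ℂ _ δ)).restrictScalars ℝ) with hΦ
      have h1 : HasDerivAt (fun τ => Φ (H τ)) (Φ (P t ∘L H t - H t ∘L P t)) t :=
        Φ.hasFDerivAt.comp_hasDerivAt t (hLax t)
      have hfun : (fun τ => Φ (H τ)) = fun τ => ((b τ n : ℝ) : ℂ) := by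
        funext τ
        have : Φ (H τ) = H τ δ n := rfl
        rw [this, hH τ δ n, hδ1, hδ2, hδ3]
        ring
      have hval : Φ (P t ∘L H t - H t ∘L P t) =
          ((2 * ((a t n) ^ 2 - (a t (n - 1)) ^ 2) : ℝ) : ℂ) := by
        have : Φ (P t ∘L H t - H t ∘L P t) = ((P t ∘L H t - H t ∘L P t) δ) n := rfl
        rw [this, hcomm t δ n, hδ1, hδ2, hδ3]
        push_cast
        ring
      rw [hfun, hval] at h1
      have h2 := Complex.reCLM.hasFDerivAt.comp_hasDerivAt t h1
      simpa [Function.comp_def, ← Complex.ofReal_pow] using h2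
  · -- Toda ⇒ Lax
    intro hToda t
    have hkey : H = fun τ => TodaAux.J (a τ, b τ) := by
      funext τ
      ext f n
      rw [hH τ f n, TodaAux.J_apply]
    have hg : HasDerivAt (fun τ => (a τ, b τ)) (deriv a t, deriv b t) t :=
      ((hadiff t).hasDerivAt.prodMk (hbdiff t).hasDerivAt)
    have hJ : HasDerivAt (fun τ => TodaAux.J (a τ, b τ))
        (TodaAux.J (deriv a t, deriv b t)) t :=
      TodaAux.J.hasFDerivAt.comp_hasDerivAt t hg
    have ha' : ∀ m : ℤ, deriv a t m = a t m * (b t (m + 1) - b t m) := by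
      intro m
      have h1 : HasDerivAt (fun τ => a τ m) (deriv a t m) t := by
        have := (BoundedContinuousFunction.evalCLM ℝ m).hasFDerivAt.comp_hasDerivAt t
          (hadiff t).hasDerivAt
        simpa [Function.comp_def, BoundedContinuousFunction.evalCLM_apply] using this
      exact h1.unique (hToda m t).1
    have hb' : ∀ m : ℤ, deriv b t m = 2 * ((a t m) ^ 2 - (a t (m - 1)) ^ 2) := by
      intro m
      have h1 : HasDerivAt (fun τ => b τ m) (deriv b t m) t := by
        have := (BoundedContinuousFunction.evalCLM ℝ m).hasFDerivAt.comp_hasDerivAt t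
          (hbdiff t).hasDerivAt
        simpa [Function.comp_def, BoundedContinuousFunction.evalCLM_apply] using this
      exact h1.unique (hToda m t).2
    have hJeq : TodaAux.J (deriv a t, deriv b t) = P t ∘L H t - H t ∘L P t := by
      ext f n
      rw [TodaAux.J_apply, hcomm t f n, ha' n, ha' (n - 1), hb' n,
        show n - 1 + 1 = n from by ring]
      push_cast
      ring
    rw [← hJeq, hkey]
    exact hJ
end

section
/- Let κ > 0, γ > 0, σ ∈ {+1, −1} and q₊ ∈ ℝ, and define q₁(n,t) = q₊ + log[(1 + (γ/(1−e^{−2κ})) exp(−2κn + 2σ sinh(κ)t)) / (1 + (γ/(1−e^{−2κ})) exp(−2κ(n+1) + 2σ sinh(κ)t))] for (n,t) ∈ ℤ × ℝ. Then q₁ solves the Toda equations of motion: for all n ∈ ℤ and t ∈ ℝ, ∂²q₁/∂t²(n,t) = exp(−(q₁(n,t) − q₁(n−1,t))) − exp(−(q₁(n+1,t) − q₁(n,t))). -/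
/-- The one-soliton `q₁(n,t)` solves the Toda equations of motion
`q̈(n,t) = exp(−(q(n,t) − q(n−1,t))) − exp(−(q(n+1,t) − q(n,t)))`. -/
theorem stmt_4 (κ γ σ qplus : ℝ) (hκ : 0 < κ) (hγ : 0 < γ) (hσ : σ = 1 ∨ σ = -1)
    (q : ℤ → ℝ → ℝ)
    (hq : ∀ (n : ℤ) (t : ℝ), q n t = qplus + Real.log
      ((1 + γ / (1 - Real.exp (-2 * κ)) * Real.exp (-2 * κ * (n : ℝ) + 2 * σ * Real.sinh κ * t)) /
       (1 + γ / (1 - Real.exp (-2 * κ)) *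
          Real.exp (-2 * κ * ((n : ℝ) + 1) + 2 * σ * Real.sinh κ * t)))) :
    (∀ n : ℤ, Differentiable ℝ (q n)) ∧
    ∀ (n : ℤ) (t : ℝ), HasDerivAt (deriv (q n))
      (Real.exp (-(q n t - q (n - 1) t)) - Real.exp (-(q (n + 1) t - q n t))) t := by
  have hσ2 : σ ^ 2 = 1 := by rcases hσ with h | h <;> simp [h]
  set c : ℝ := γ / (1 - Real.exp (-2 * κ)) with hcdef
  have hc : 0 < c := by
    apply div_pos hγ
    have h1 : Real.exp (-2 * κ) < 1 := Real.exp_lt_one_iff.mpr (by linarith)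
    linarith
  set v : ℝ := σ * Real.sinh κ with hvdef
  set g : ℤ → ℝ → ℝ :=
    fun n t => c * Real.exp (-2 * κ * (n : ℝ) + 2 * σ * Real.sinh κ * t) with hgdef
  have hgpos : ∀ (n : ℤ) (t : ℝ), 0 < g n t := fun n t => mul_pos hc (Real.exp_pos _)
  have hfpos : ∀ (n : ℤ) (t : ℝ), 0 < 1 + g n t := fun n t => by
    have := hgpos n t; linarith
  have hq' : ∀ (n : ℤ) (t : ℝ),
      q n t = qplus + (Real.log (1 + g n t) - Real.log (1 + g (n + 1) t)) := by
    intro n t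
    have h2 : (1 : ℝ) + c * Real.exp (-2 * κ * ((n : ℝ) + 1) + 2 * σ * Real.sinh κ * t)
        = 1 + g (n + 1) t := by
      simp only [hgdef]; push_cast; ring_nf
    rw [hq n t, Real.log_div (ne_of_gt (by positivity)) (ne_of_gt (by positivity))]
    rw [h2]
  -- derivative of g n
  have hgd : ∀ (n : ℤ) (t : ℝ), HasDerivAt (g n) (2 * v * g n t) t := by
    intro n t
    have h1 : HasDerivAt (fun t : ℝ => -2 * κ * (n : ℝ) + 2 * σ * Real.sinh κ * t)
        (2 * σ * Real.sinh κ) t := by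
      simpa using ((hasDerivAt_id t).const_mul (2 * σ * Real.sinh κ)).const_add
        (-2 * κ * (n : ℝ))
    have h2 := (h1.exp).const_mul c
    refine h2.congr_deriv ?_
    simp only [hgdef, hvdef]
    ring
  have hLd : ∀ (n : ℤ) (t : ℝ),
      HasDerivAt (fun t => Real.log (1 + g n t)) (2 * v * g n t / (1 + g n t)) t :=
    fun n t => ((hgd n t).const_add 1).log (ne_of_gt (hfpos n t))
  have hqd : ∀ (n : ℤ) (t : ℝ), HasDerivAt (q n)
      (2 * v * g n t / (1 + g n t) - 2 * v * g (n + 1) t / (1 + g (n + 1) t)) t := by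
    intro n t
    have hfe : q n = fun t => qplus + (Real.log (1 + g n t) - Real.log (1 + g (n + 1) t)) :=
      funext (hq' n)
    rw [hfe]
    exact ((hLd n t).sub (hLd (n + 1) t)).const_add qplus
  have hderiv : ∀ n : ℤ, deriv (q n)
      = fun t => 2 * v * g n t / (1 + g n t) - 2 * v * g (n + 1) t / (1 + g (n + 1) t) :=
    fun n => funext fun t => (hqd n t).deriv
  have hsecond : ∀ (n : ℤ) (t : ℝ),
      HasDerivAt (fun t => 2 * v * g n t / (1 + g n t))
        (4 * v ^ 2 * (g n t / (1 + g n t) ^ 2)) t := by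
    intro n t
    have hnum := (hgd n t).const_mul (2 * v)
    have hden := (hgd n t).const_add 1
    have h := hnum.div hden (ne_of_gt (hfpos n t))
    refine h.congr_deriv ?_
    have hne := ne_of_gt (hfpos n t)
    field_simp
    ring
  -- exponential facts
  have hEE : Real.exp (2 * κ) * Real.exp (-(2 * κ)) = 1 := by
    rw [← Real.exp_add]; simp
  have h4v : 4 * v ^ 2 = Real.exp (2 * κ) + Real.exp (-(2 * κ)) - 2 := by
    have he2 : Real.exp (2 * κ) = Real.exp κ * Real.exp κ := by
      rw [← Real.exp_add]; ring_nf
    have he2' : Real.exp (-(2 * κ)) = Real.exp (-κ) * Real.exp (-κ) := by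
      rw [← Real.exp_add]; ring_nf
    have hp : Real.exp κ * Real.exp (-κ) = 1 := by rw [← Real.exp_add]; simp
    rw [hvdef, Real.sinh_eq, he2, he2']
    linear_combination (Real.exp κ - Real.exp (-κ)) ^ 2 * hσ2 - 2 * hp
  -- shift relations
  have hsh1 : ∀ (m : ℤ) (t : ℝ), g (m - 1) t = Real.exp (2 * κ) * g m t := by
    intro m t
    simp only [hgdef]
    push_cast
    rw [show -2 * κ * ((m : ℝ) - 1) + 2 * σ * Real.sinh κ * t
        = 2 * κ + (-2 * κ * (m : ℝ) + 2 * σ * Real.sinh κ * t) by ring, Real.exp_add]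
    ring
  have hsh2 : ∀ (m : ℤ) (t : ℝ), g (m + 1) t = Real.exp (-(2 * κ)) * g m t := by
    intro m t
    simp only [hgdef]
    push_cast
    rw [show -2 * κ * ((m : ℝ) + 1) + 2 * σ * Real.sinh κ * t
        = -(2 * κ) + (-2 * κ * (m : ℝ) + 2 * σ * Real.sinh κ * t) by ring, Real.exp_add]
    ring
  -- the key per-site identity
  have key : ∀ (m : ℤ) (t : ℝ), Real.exp (-(q m t - q (m - 1) t))
      = 1 + 4 * v ^ 2 * (g m t / (1 + g m t) ^ 2) := by
    intro m t
    have hm11 : (m - 1 + 1 : ℤ) = m := by ring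
    have hlog : -(q m t - q (m - 1) t)
        = Real.log ((1 + g (m - 1) t) * (1 + g (m + 1) t) / (1 + g m t) ^ 2) := by
      rw [Real.log_div (ne_of_gt (by positivity)) (ne_of_gt (by positivity)),
        Real.log_mul (ne_of_gt (hfpos _ _)) (ne_of_gt (hfpos _ _)), Real.log_pow,
        hq' m t, hq' (m - 1) t, hm11]
      push_cast
      ring
    rw [hlog, Real.exp_log (by positivity), hsh1 m t, hsh2 m t, h4v]
    have hne := ne_of_gt (hfpos m t)
    generalize hga : g m t = a at hne ⊢
    field_simp
    linear_combination a ^ 2 * hEE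
  constructor
  · exact fun n t => (hqd n t).differentiableAt
  · intro n t
    have h := (hsecond n t).sub (hsecond (n + 1) t)
    rw [hderiv n]
    have k1 := key n t
    have k2 := key (n + 1) t
    rw [show (n + 1 - 1 : ℤ) = n by ring] at k2
    refine h.congr_deriv ?_
    rw [k1, k2]
    ring
end

section
/- Let ζ ∈ (−1,0) ∪ (0,1) and γ ≥ 0, and define the one-soliton function f(z) = (γζ²·(z−ζ⁻¹)/(z−ζ) + 1 − ζ²) / ( sqrt(1−ζ²+γ) · sqrt(1−ζ²+ζ²γ) ) for complex z ≠ ζ. Then: (i) the residue of f at ζ, i.e. lim_{z→ζ} (z−ζ) f(z), equals −ζ γ f(ζ⁻¹); (ii) f(0) · lim_{z→∞} f(z) = 1; (iii) f(0) > 0. -/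
lemma sub_const_cobounded (b : ℂ) :
    Filter.Tendsto (fun z : ℂ => z - b) (Bornology.cobounded ℂ) (Bornology.cobounded ℂ) := by
  rw [← tendsto_norm_atTop_iff_cobounded]
  have h1 : Filter.Tendsto (fun z : ℂ => ‖z‖ - ‖b‖) (Bornology.cobounded ℂ) Filter.atTop :=
    Filter.tendsto_atTop_add_const_right _ (-‖b‖) tendsto_norm_cobounded_atTop |>.congr
      (fun x => by ring)
  exact Filter.tendsto_atTop_mono (fun z => by
    have := norm_sub_norm_le z b; linarith) h1

/-- Properties of the one-soliton function
`f(z) = (γζ²(z−ζ⁻¹)/(z−ζ) + 1 − ζ²)/(√(1−ζ²+γ)·√(1−ζ²+ζ²γ))`: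
(i) the residue at `ζ` equals `−ζγ f(ζ⁻¹)`; (ii) `f(0)·lim_{z→∞} f(z) = 1`;
(iii) `f(0) > 0`. -/
theorem stmt_8 (ζ γ : ℝ) (hζ : ζ ∈ Set.Ioo (-1 : ℝ) 0 ∪ Set.Ioo (0 : ℝ) 1) (hγ : 0 ≤ γ)
    (f : ℂ → ℂ)
    (hf : ∀ z : ℂ, f z =
      ((γ : ℂ) * (ζ : ℂ) ^ 2 * (z - (ζ : ℂ)⁻¹) / (z - (ζ : ℂ)) + 1 - (ζ : ℂ) ^ 2) /
        ((Real.sqrt (1 - ζ ^ 2 + γ) : ℂ) * (Real.sqrt (1 - ζ ^ 2 + ζ ^ 2 * γ) : ℂ))) :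
    Filter.Tendsto (fun z => (z - (ζ : ℂ)) * f z) (nhdsWithin (ζ : ℂ) {(ζ : ℂ)}ᶜ)
      (nhds (-(ζ : ℂ) * (γ : ℂ) * f ((ζ : ℂ)⁻¹))) ∧
    (∃ L : ℂ, Filter.Tendsto f (Bornology.cobounded ℂ) (nhds L) ∧ f 0 * L = 1) ∧
    (∃ r : ℝ, f 0 = (r : ℂ) ∧ 0 < r) := by
  -- basic facts about ζ
  have hζ0 : ζ ≠ 0 := by rcases hζ with h | h <;> [exact ne_of_lt h.2; exact ne_of_gt h.1]
  have hζ1 : ζ ^ 2 < 1 := by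
    rcases hζ with h | h <;> nlinarith [h.1, h.2]
  have ha : (0:ℝ) < 1 - ζ ^ 2 + γ := by linarith
  have hb : (0:ℝ) < 1 - ζ ^ 2 + ζ ^ 2 * γ := by nlinarith [sq_nonneg ζ]
  set sa := Real.sqrt (1 - ζ ^ 2 + γ) with hsa
  set sb := Real.sqrt (1 - ζ ^ 2 + ζ ^ 2 * γ) with hsb
  have hsa0 : 0 < sa := Real.sqrt_pos.mpr ha
  have hsb0 : 0 < sb := Real.sqrt_pos.mpr hb
  have hS : ((sa : ℂ) * (sb : ℂ)) ≠ 0 := by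
    simp [Complex.ofReal_ne_zero, ne_of_gt hsa0, ne_of_gt hsb0]
  have hζc : (ζ : ℂ) ≠ 0 := by exact_mod_cast hζ0
  constructor
  · -- residue
    have key : ∀ z : ℂ, z ≠ (ζ : ℂ) → (z - (ζ : ℂ)) * f z =
        ((γ : ℂ) * (ζ : ℂ) ^ 2 * (z - (ζ : ℂ)⁻¹) + (1 - (ζ : ℂ) ^ 2) * (z - (ζ : ℂ))) /
          ((sa : ℂ) * (sb : ℂ)) := by
      intro z hz
      rw [hf z]
      have hz' : z - (ζ : ℂ) ≠ 0 := sub_ne_zero.mpr hz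
      field_simp
      ring
    have hval : f ((ζ : ℂ)⁻¹) = (1 - (ζ : ℂ) ^ 2) / ((sa : ℂ) * (sb : ℂ)) := by
      rw [hf]; norm_num
    have hlim : Filter.Tendsto
        (fun z : ℂ => ((γ : ℂ) * (ζ : ℂ) ^ 2 * (z - (ζ : ℂ)⁻¹) + (1 - (ζ : ℂ) ^ 2) * (z - (ζ : ℂ))) /
          ((sa : ℂ) * (sb : ℂ)))
        (nhdsWithin (ζ : ℂ) {(ζ : ℂ)}ᶜ)
        (nhds (-(ζ : ℂ) * (γ : ℂ) * f ((ζ : ℂ)⁻¹))) := by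
      have hc : Continuous (fun z : ℂ =>
          ((γ : ℂ) * (ζ : ℂ) ^ 2 * (z - (ζ : ℂ)⁻¹) + (1 - (ζ : ℂ) ^ 2) * (z - (ζ : ℂ))) /
          ((sa : ℂ) * (sb : ℂ))) := by fun_prop
      convert (hc.tendsto (ζ : ℂ)).mono_left nhdsWithin_le_nhds using 2
      rw [hval]
      field_simp
      ring
    exact hlim.congr' (by
      filter_upwards [self_mem_nhdsWithin] with z hz
      exact (key z hz).symm)
  constructor
  · -- limit at infinity
    refine ⟨((γ : ℂ) * (ζ : ℂ) ^ 2 + 1 - (ζ : ℂ) ^ 2) / ((sa : ℂ) * (sb : ℂ)), ?_, ?_⟩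
    · -- tendsto
      have h1 : Filter.Tendsto (fun z : ℂ => (z - (ζ : ℂ))⁻¹) (Bornology.cobounded ℂ) (nhds 0) :=
        Filter.tendsto_inv₀_cobounded.comp (sub_const_cobounded _)
      have h2 : Filter.Tendsto (fun z : ℂ => (z - (ζ : ℂ)⁻¹) / (z - (ζ : ℂ)))
          (Bornology.cobounded ℂ) (nhds 1) := by
        have : Filter.Tendsto (fun z : ℂ => 1 + ((ζ : ℂ) - (ζ : ℂ)⁻¹) * (z - (ζ : ℂ))⁻¹)
            (Bornology.cobounded ℂ) (nhds 1) := by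
          have := (h1.const_mul ((ζ : ℂ) - (ζ : ℂ)⁻¹)).const_add 1
          simpa using this
        refine this.congr' ?_
        filter_upwards [(sub_const_cobounded (ζ : ℂ)).eventually
          (Bornology.eventually_ne_cobounded 0)] with z hz
        field_simp
        ring
      have h3 := (((h2.const_mul ((γ : ℂ) * (ζ : ℂ) ^ 2)).add_const 1).sub_const ((ζ : ℂ) ^ 2)).div_const
        ((sa : ℂ) * (sb : ℂ))
      refine h3.congr' ?_ |>.mono_right (le_of_eq ?_)
      · filter_upwards with z
        rw [hf z]
        ring_nf
      · congr 1; ring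
    · -- product = 1
      have hf0 : f 0 = ((γ : ℂ) + 1 - (ζ : ℂ) ^ 2) / ((sa : ℂ) * (sb : ℂ)) := by
        rw [hf 0]
        congr 1
        field_simp
        ring
      rw [hf0]
      have hsq : ((sa : ℂ) * (sb : ℂ)) * ((sa : ℂ) * (sb : ℂ)) =
          ((1 - ζ ^ 2 + γ : ℝ) : ℂ) * ((1 - ζ ^ 2 + ζ ^ 2 * γ : ℝ) : ℂ) := by
        have h1 : sa * sa = 1 - ζ ^ 2 + γ := Real.mul_self_sqrt ha.le
        have h2 : sb * sb = 1 - ζ ^ 2 + ζ ^ 2 * γ := Real.mul_self_sqrt hb.le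
        push_cast [← h1, ← h2]
        ring
      field_simp
      rw [div_eq_one_iff_eq (by rw [← mul_pow]; exact pow_ne_zero 2 hS),
        show (sa : ℂ) ^ 2 * (sb : ℂ) ^ 2 = ((sa : ℂ) * (sb : ℂ)) * ((sa : ℂ) * (sb : ℂ)) by ring, hsq]
      push_cast
      ring
  · -- positivity
    have hf0 : f 0 = ((γ : ℂ) + 1 - (ζ : ℂ) ^ 2) / ((sa : ℂ) * (sb : ℂ)) := by
      rw [hf 0]
      congr 1
      field_simp
      ring
    refine ⟨(γ + 1 - ζ ^ 2) / (sa * sb), ?_, ?_⟩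
    · rw [hf0]; push_cast; ring_nf
    · exact div_pos (by linarith) (by positivity)
end

section
/- Let θ₀ ∈ (−π,0) and z₀ = e^{iθ₀}, let ζ₁, …, ζ_m ∈ (−1,0), and let ρ : [−θ₀, 2π+θ₀] → (0,∞) be continuous with ρ(2π−θ) = ρ(θ) for all θ in this interval. Define T(z) = ( ∏_{k=1}^m |ζ_k| (z−ζ_k⁻¹)/(z−ζ_k) ) · exp( (1/(2π)) ∫_{−θ₀}^{2π+θ₀} log ρ(θ) · (e^{iθ}+z)/(e^{iθ}−z) dθ ). Then for every complex z not lying on the arc {e^{iθ} : θ ∈ [−θ₀, 2π+θ₀]} and with z ∉ {0, ζ_k, ζ_k⁻¹ : 1 ≤ k ≤ m}: (i) T(1/z) · T(z) = 1; (ii) conj(T(conj z)) = T(z), so in particular T is real-valued on the real axis; and (iii) T(0) > 0. -/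
open scoped Real

lemma ker_inv_aux (e z : ℂ) (he : e ≠ 0) (hz : z ≠ 0) :
    (e + z⁻¹) / (e - z⁻¹) = -((e⁻¹ + z) / (e⁻¹ - z)) := by
  rcases eq_or_ne e z⁻¹ with h | h
  · subst h
    simp [inv_inv, sub_self]
  · have h2 : e⁻¹ ≠ z := fun H => h (by rw [← H, inv_inv])
    have h1 := sub_ne_zero.mpr h
    have h3 := sub_ne_zero.mpr h2
    have h4 : e * z ≠ 1 := fun H => h (eq_inv_of_mul_eq_one_left H)
    have h5 : (1 : ℂ) - e * z ≠ 0 := sub_ne_zero.mpr (Ne.symm h4)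
    have h6 : (-1 : ℂ) + e * z ≠ 0 := by
      intro H; exact h4 (by linear_combination H)
    field_simp
    ring

lemma conj_intervalIntegral_aux (f : ℝ → ℂ) (a b : ℝ) :
    (starRingEnd ℂ) (∫ x in a..b, f x) = ∫ x in a..b, (starRingEnd ℂ) (f x) := by
  unfold intervalIntegral
  rw [map_sub, ← integral_conj, ← integral_conj]

/-- Properties of the partial transmission coefficient `T(z,z₀)` associated with a stationary
phase point `z₀ = e^{iθ₀}` on the unit circle: for `z` off the arc and away from `0`, the
`ζ_k` and the `ζ_k⁻¹` one has (i) `T(1/z)T(z) = 1`, (ii) `conj(T(conj z)) = T(z)` (so `T` is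
real on the real axis), and (iii) `T(0) > 0`. -/
theorem stmt_11 (θ₀ : ℝ) (hθ₀ : θ₀ ∈ Set.Ioo (-π) 0) (m : ℕ) (ζ : Fin m → ℝ)
    (hζ : ∀ k, ζ k ∈ Set.Ioo (-1 : ℝ) 0)
    (ρ : ℝ → ℝ)
    (hρcont : ContinuousOn ρ (Set.Icc (-θ₀) (2 * π + θ₀)))
    (hρpos : ∀ θ ∈ Set.Icc (-θ₀) (2 * π + θ₀), 0 < ρ θ)
    (hρsym : ∀ θ ∈ Set.Icc (-θ₀) (2 * π + θ₀), ρ (2 * π - θ) = ρ θ)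
    (T : ℂ → ℂ)
    (hT : ∀ z : ℂ, T z =
      (∏ k, ((|ζ k| : ℝ) : ℂ) * ((z - (ζ k : ℂ)⁻¹) / (z - (ζ k : ℂ)))) *
        Complex.exp ((1 / (2 * (π : ℂ))) * ∫ θ in (-θ₀)..(2 * π + θ₀),
          (Real.log (ρ θ) : ℂ) *
            ((Complex.exp (θ * Complex.I) + z) / (Complex.exp (θ * Complex.I) - z)))) :
    (∀ z : ℂ,
      z ∉ {w : ℂ | ∃ θ ∈ Set.Icc (-θ₀) (2 * π + θ₀), w = Complex.exp (θ * Complex.I)} →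
      z ≠ 0 → (∀ k, z ≠ (ζ k : ℂ)) → (∀ k, z ≠ (ζ k : ℂ)⁻¹) →
      (T z⁻¹ * T z = 1 ∧
       (starRingEnd ℂ) (T ((starRingEnd ℂ) z)) = T z ∧
       (z.im = 0 → (T z).im = 0))) ∧
    (∃ r : ℝ, T 0 = (r : ℂ) ∧ 0 < r) := by
  have hab : (-θ₀ : ℝ) ≤ 2 * π + θ₀ := by
    have h1 := hθ₀.1; have h2 := hθ₀.2; linarith
  -- substitution θ ↦ 2π - θ preserves the interval
  have hIsub : ∀ F : ℝ → ℂ,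
      (∫ θ in (-θ₀)..(2 * π + θ₀), F (2 * π - θ)) = ∫ θ in (-θ₀)..(2 * π + θ₀), F θ := by
    intro F
    rw [intervalIntegral.integral_comp_sub_left F (2 * π),
      show 2 * π - (2 * π + θ₀) = -θ₀ from by ring,
      show 2 * π - -θ₀ = 2 * π + θ₀ from by ring]
  -- key symmetry of the integral
  have hsym : ∀ w : ℂ,
      (∫ θ in (-θ₀)..(2 * π + θ₀), (Real.log (ρ θ) : ℂ) *
          ((Complex.exp (-(θ * Complex.I)) + w) / (Complex.exp (-(θ * Complex.I)) - w)))
        = ∫ θ in (-θ₀)..(2 * π + θ₀), (Real.log (ρ θ) : ℂ) *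
          ((Complex.exp (θ * Complex.I) + w) / (Complex.exp (θ * Complex.I) - w)) := by
    intro w
    set G : ℝ → ℂ := fun u => (Real.log (ρ (2 * π - u)) : ℂ) *
          ((Complex.exp (u * Complex.I) + w) / (Complex.exp (u * Complex.I) - w)) with hG
    have step1 : (∫ θ in (-θ₀)..(2 * π + θ₀), (Real.log (ρ θ) : ℂ) *
          ((Complex.exp (-(θ * Complex.I)) + w) / (Complex.exp (-(θ * Complex.I)) - w)))
        = ∫ θ in (-θ₀)..(2 * π + θ₀), G (2 * π - θ) := by
      apply intervalIntegral.integral_congr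
      intro θ _
      simp only [hG]
      rw [show 2 * π - (2 * π - θ) = θ from by ring]
      rw [show ((2 * π - θ : ℝ) : ℂ) * Complex.I = 2 * (π : ℂ) * Complex.I + -(↑θ * Complex.I)
          from by push_cast; ring,
        Complex.exp_add, Complex.exp_two_pi_mul_I, one_mul]
    rw [step1, hIsub G]
    apply intervalIntegral.integral_congr
    intro u hu
    rw [Set.uIcc_of_le hab] at hu
    simp only [hG]
    rw [hρsym u hu]
  constructor
  · intro z _ hz0 hzζ hzζi
    -- the integral at z⁻¹ is the negative of the integral at z
    have hptw : ∀ θ : ℝ, (Real.log (ρ θ) : ℂ) *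
        ((Complex.exp (θ * Complex.I) + z⁻¹) / (Complex.exp (θ * Complex.I) - z⁻¹))
        = -((Real.log (ρ θ) : ℂ) *
          ((Complex.exp (-(θ * Complex.I)) + z) / (Complex.exp (-(θ * Complex.I)) - z))) := by
      intro θ
      rw [ker_inv_aux _ z (Complex.exp_ne_zero _) hz0, ← Complex.exp_neg]
      ring
    have hInt_inv : (∫ θ in (-θ₀)..(2 * π + θ₀), (Real.log (ρ θ) : ℂ) *
          ((Complex.exp (θ * Complex.I) + z⁻¹) / (Complex.exp (θ * Complex.I) - z⁻¹)))
        = -(∫ θ in (-θ₀)..(2 * π + θ₀), (Real.log (ρ θ) : ℂ) *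
          ((Complex.exp (θ * Complex.I) + z) / (Complex.exp (θ * Complex.I) - z))) := by
      rw [intervalIntegral.integral_congr (g := fun θ : ℝ => -((Real.log (ρ θ) : ℂ) *
          ((Complex.exp (-(θ * Complex.I)) + z) / (Complex.exp (-(θ * Complex.I)) - z))))
          (fun θ _ => hptw θ),
        intervalIntegral.integral_neg, hsym z]
    refine ⟨?_, ?_, ?_⟩
    · -- (i) T(1/z) T(z) = 1
      rw [hT z⁻¹, hT z, hInt_inv, mul_mul_mul_comm]
      set S := ∫ θ in (-θ₀)..(2 * π + θ₀), (Real.log (ρ θ) : ℂ) *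
          ((Complex.exp (θ * Complex.I) + z) / (Complex.exp (θ * Complex.I) - z)) with hS
      have hexp : Complex.exp (1 / (2 * (π : ℂ)) * -S) * Complex.exp (1 / (2 * (π : ℂ)) * S)
          = 1 := by
        rw [← Complex.exp_add, show 1 / (2 * (π : ℂ)) * -S + 1 / (2 * (π : ℂ)) * S = 0
          from by ring, Complex.exp_zero]
      rw [hexp, mul_one, ← Finset.prod_mul_distrib]
      apply Finset.prod_eq_one
      intro k _
      have hkneg : ζ k < 0 := (hζ k).2
      have habs : ((|ζ k| : ℝ) : ℂ) = -(ζ k : ℂ) := by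
        rw [abs_of_neg hkneg]; push_cast; ring
      have hc0 : (ζ k : ℂ) ≠ 0 := Complex.ofReal_ne_zero.mpr (ne_of_lt hkneg)
      have h1 : z - (ζ k : ℂ) ≠ 0 := sub_ne_zero.mpr (hzζ k)
      have h3 : z - (ζ k : ℂ)⁻¹ ≠ 0 := sub_ne_zero.mpr (hzζi k)
      have h2 : z⁻¹ - (ζ k : ℂ) ≠ 0 :=
        sub_ne_zero.mpr (fun H => hzζi k (by rw [← H, inv_inv]))
      have h4 : z⁻¹ - (ζ k : ℂ)⁻¹ ≠ 0 :=
        sub_ne_zero.mpr (fun H => hzζ k (inv_injective H))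
      rw [habs]
      have key : (-(ζ k : ℂ)) * (z⁻¹ - (ζ k : ℂ)⁻¹) * ((-(ζ k : ℂ)) * (z - (ζ k : ℂ)⁻¹))
          = (z⁻¹ - (ζ k : ℂ)) * (z - (ζ k : ℂ)) := by
        linear_combination ((ζ k : ℂ)^2 - 1) * mul_inv_cancel₀ hz0 +
          (-(z⁻¹ * (ζ k : ℂ)) - (ζ k : ℂ) * z + (ζ k : ℂ) * (ζ k : ℂ)⁻¹ + 1) *
            mul_inv_cancel₀ hc0
      rw [mul_div_assoc', mul_div_assoc', div_mul_div_comm, key,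
        div_self (mul_ne_zero h2 h1)]
    · -- (ii) conj(T(conj z)) = T z
      rw [hT ((starRingEnd ℂ) z), hT z]
      rw [map_mul, map_prod, ← Complex.exp_conj, map_mul, conj_intervalIntegral_aux]
      congr 1
      · exact Finset.prod_congr rfl fun k _ => by
          simp [map_mul, map_div₀, map_sub, map_inv₀, Complex.conj_conj, Complex.conj_ofReal]
      · congr 1
        rw [show (starRingEnd ℂ) (1 / (2 * (π : ℂ))) = 1 / (2 * (π : ℂ)) from by
          simp [map_div₀, map_ofNat, Complex.conj_ofReal]]
        congr 1
        rw [← hsym z]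
        refine intervalIntegral.integral_congr fun θ _ => ?_
        simp [map_mul, map_div₀, map_add, map_sub, Complex.conj_conj, Complex.conj_ofReal,
          ← Complex.exp_conj, Complex.conj_I]
    · -- real on the real axis
      intro him
      have hz' : (starRingEnd ℂ) z = z := Complex.conj_eq_iff_im.mpr him
      -- reuse (ii)
      have hconj : (starRingEnd ℂ) (T ((starRingEnd ℂ) z)) = T z := by
        rw [hT ((starRingEnd ℂ) z), hT z]
        rw [map_mul, map_prod, ← Complex.exp_conj, map_mul, conj_intervalIntegral_aux]
        congr 1
        · exact Finset.prod_congr rfl fun k _ => by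
            simp [map_mul, map_div₀, map_sub, map_inv₀, Complex.conj_conj, Complex.conj_ofReal]
        · congr 1
          rw [show (starRingEnd ℂ) (1 / (2 * (π : ℂ))) = 1 / (2 * (π : ℂ)) from by
            simp [map_div₀, map_ofNat, Complex.conj_ofReal]]
          congr 1
          rw [← hsym z]
          refine intervalIntegral.integral_congr fun θ _ => ?_
          simp [map_mul, map_div₀, map_add, map_sub, Complex.conj_conj, Complex.conj_ofReal,
            ← Complex.exp_conj, Complex.conj_I]
      rw [hz'] at hconj
      exact Complex.conj_eq_iff_im.mp hconj
  · -- (iii) T 0 > 0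
    have h0 : ∀ θ : ℝ, (Real.log (ρ θ) : ℂ) *
        ((Complex.exp (θ * Complex.I) + 0) / (Complex.exp (θ * Complex.I) - 0))
        = (Real.log (ρ θ) : ℂ) := fun θ => by
      rw [add_zero, sub_zero, div_self (Complex.exp_ne_zero _), mul_one]
    have hint : (∫ θ in (-θ₀)..(2 * π + θ₀), (Real.log (ρ θ) : ℂ) *
          ((Complex.exp (θ * Complex.I) + 0) / (Complex.exp (θ * Complex.I) - 0)))
        = ((∫ θ in (-θ₀)..(2 * π + θ₀), Real.log (ρ θ) : ℝ) : ℂ) := by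
      rw [intervalIntegral.integral_congr (g := fun θ : ℝ => (Real.log (ρ θ) : ℂ))
        (fun θ _ => h0 θ)]
      exact intervalIntegral.integral_ofReal
    set L : ℝ := ∫ θ in (-θ₀)..(2 * π + θ₀), Real.log (ρ θ) with hL
    have hprod0 : (∏ k, ((|ζ k| : ℝ) : ℂ) * ((0 - (ζ k : ℂ)⁻¹) / (0 - (ζ k : ℂ))))
        = ((∏ k, -(ζ k)⁻¹ : ℝ) : ℂ) := by
      rw [Complex.ofReal_prod]
      refine Finset.prod_congr rfl fun k _ => ?_
      have hkneg : ζ k < 0 := (hζ k).2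
      have hc0 : (ζ k : ℂ) ≠ 0 := Complex.ofReal_ne_zero.mpr (ne_of_lt hkneg)
      rw [abs_of_neg hkneg]
      push_cast
      field_simp
      ring
    have hexp0 : Complex.exp (1 / (2 * (π : ℂ)) * (L : ℂ))
        = ((Real.exp (1 / (2 * π) * L) : ℝ) : ℂ) := by
      rw [Complex.ofReal_exp]
      congr 1
      push_cast
      ring
    refine ⟨(∏ k, -(ζ k)⁻¹) * Real.exp (1 / (2 * π) * L), ?_, ?_⟩
    · rw [hT 0, hint, hprod0, hexp0, ← Complex.ofReal_mul]
    · apply mul_pos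
      · apply Finset.prod_pos
        intro k _
        have hkneg : ζ k < 0 := (hζ k).2
        have : (ζ k)⁻¹ < 0 := inv_lt_zero.mpr hkneg
        linarith
      · exact Real.exp_pos _
end

section
/- Let θ₀ ∈ (−π,0) and z₀ = e^{iθ₀}, let ζ₁, …, ζ_m ∈ (−1,0), and let ρ : [−θ₀, 2π+θ₀] → (0,∞) be continuous with ρ(2π−θ) = ρ(θ). Define T(z) = ( ∏_{k=1}^m |ζ_k| (z−ζ_k⁻¹)/(z−ζ_k) ) · exp( (1/(2π)) ∫_{−θ₀}^{2π+θ₀} log ρ(θ) · (e^{iθ}+z)/(e^{iθ}−z) dθ ). Then for every point z = e^{iφ} on the unit circle with φ ∈ (θ₀, −θ₀) (i.e. z not on the closed arc {e^{iθ} : θ ∈ [−θ₀, 2π+θ₀]}), one has |T(z)| = 1. -/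
open scoped Real

lemma aux_re_zero (a b : ℂ) (h : Complex.normSq a = Complex.normSq b) :
    ((a + b) / (a - b)).re = 0 := by
  rw [Complex.div_re, ← add_div]
  have hnum : (a + b).re * (a - b).re + (a + b).im * (a - b).im = 0 := by
    simp only [Complex.add_re, Complex.sub_re, Complex.add_im, Complex.sub_im]
    simp only [Complex.normSq_apply] at h
    nlinarith [h]
  rw [hnum, zero_div]

/-- The partial transmission coefficient `T(z,z₀)` has modulus one on the part of the unit
circle complementary to the arc `Σ(z₀) = {e^{iθ} : θ ∈ [−θ₀, 2π+θ₀]}`. -/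
theorem stmt_12 (θ₀ : ℝ) (hθ₀ : θ₀ ∈ Set.Ioo (-π) 0) (m : ℕ) (ζ : Fin m → ℝ)
    (hζ : ∀ k, ζ k ∈ Set.Ioo (-1 : ℝ) 0)
    (ρ : ℝ → ℝ)
    (hρcont : ContinuousOn ρ (Set.Icc (-θ₀) (2 * π + θ₀)))
    (hρpos : ∀ θ ∈ Set.Icc (-θ₀) (2 * π + θ₀), 0 < ρ θ)
    (hρsym : ∀ θ ∈ Set.Icc (-θ₀) (2 * π + θ₀), ρ (2 * π - θ) = ρ θ)
    (T : ℂ → ℂ)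
    (hT : ∀ z : ℂ, T z =
      (∏ k, ((|ζ k| : ℝ) : ℂ) * ((z - (ζ k : ℂ)⁻¹) / (z - (ζ k : ℂ)))) *
        Complex.exp ((1 / (2 * (π : ℂ))) * ∫ θ in (-θ₀)..(2 * π + θ₀),
          (Real.log (ρ θ) : ℂ) *
            ((Complex.exp (θ * Complex.I) + z) / (Complex.exp (θ * Complex.I) - z)))) :
    ∀ φ : ℝ, φ ∈ Set.Ioo θ₀ (-θ₀) →
      ‖T (Complex.exp (φ * Complex.I))‖ = 1 := by
  intro φ hφ
  set z : ℂ := Complex.exp (φ * Complex.I) with hzdef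
  have hzabs : ‖z‖ = 1 := by
    rw [hzdef, Complex.norm_exp]
    simp
  have hznorm : Complex.normSq z = 1 := by
    rw [Complex.normSq_eq_norm_sq, hzabs]; norm_num
  have hzconj : z * (starRingEnd ℂ) z = 1 := by
    rw [Complex.mul_conj, hznorm, Complex.ofReal_one]
  rw [hT, norm_mul]
  -- Blaschke product has modulus 1
  have h1 : ‖∏ k, ((|ζ k| : ℝ) : ℂ) * ((z - (ζ k : ℂ)⁻¹) / (z - (ζ k : ℂ)))‖ = 1 := by
    rw [norm_prod]
    apply Finset.prod_eq_one
    intro k _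
    have hk := hζ k
    have hζne : (ζ k : ℂ) ≠ 0 := by
      exact_mod_cast ne_of_lt hk.2
    have habsζ : |ζ k| < 1 := by
      rw [abs_lt]; constructor <;> linarith [hk.1, hk.2]
    have hne : z - (ζ k : ℂ) ≠ 0 := by
      intro h
      rw [sub_eq_zero] at h
      have : ‖z‖ = ‖((ζ k : ℝ) : ℂ)‖ := by rw [h]
      rw [hzabs, Complex.norm_real, Real.norm_eq_abs] at this
      linarith
    have key : (|ζ k| : ℝ) * ‖z - (ζ k : ℂ)⁻¹‖ = ‖z - (ζ k : ℂ)‖ := by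
      have h1' : ((ζ k : ℂ)) * (z - (ζ k : ℂ)⁻¹) = -z * (starRingEnd ℂ) (z - (ζ k : ℂ)) := by
        have hconjζ : (starRingEnd ℂ) ((ζ k : ℝ) : ℂ) = ((ζ k : ℝ) : ℂ) := Complex.conj_ofReal _
        have : (starRingEnd ℂ) (z - (ζ k : ℂ)) = (starRingEnd ℂ) z - (ζ k : ℂ) := by
          rw [map_sub, hconjζ]
        rw [this, mul_sub, mul_inv_cancel₀ hζne]
        linear_combination hzconj
      calc (|ζ k| : ℝ) * ‖z - (ζ k : ℂ)⁻¹‖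
          = ‖(ζ k : ℂ)‖ * ‖z - (ζ k : ℂ)⁻¹‖ := by
            rw [Complex.norm_real, Real.norm_eq_abs]
        _ = ‖(ζ k : ℂ) * (z - (ζ k : ℂ)⁻¹)‖ := (norm_mul _ _).symm
        _ = ‖-z * (starRingEnd ℂ) (z - (ζ k : ℂ))‖ := by rw [h1']
        _ = ‖z - (ζ k : ℂ)‖ := by
            rw [norm_mul, norm_neg, hzabs, Complex.norm_conj, one_mul]
    rw [norm_mul, norm_div, Complex.norm_real, Real.norm_eq_abs, abs_abs, ← mul_div_assoc, key,
      div_self (norm_ne_zero_iff.mpr hne)]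
  -- exponential factor has modulus 1
  have h2 : ‖(Complex.exp ((1 / (2 * (π : ℂ))) * ∫ θ in (-θ₀)..(2 * π + θ₀),
      (Real.log (ρ θ) : ℂ) *
        ((Complex.exp (θ * Complex.I) + z) / (Complex.exp (θ * Complex.I) - z))))‖ = 1 := by
    rw [Complex.norm_exp]
    set f : ℝ → ℂ := fun θ => (Real.log (ρ θ) : ℂ) *
      ((Complex.exp (θ * Complex.I) + z) / (Complex.exp (θ * Complex.I) - z)) with hf
    have hre : ∀ θ : ℝ, (f θ).re = 0 := by
      intro θ
      have habsθ : Complex.normSq (Complex.exp (θ * Complex.I)) = Complex.normSq z := by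
        rw [Complex.normSq_eq_norm_sq, Complex.normSq_eq_norm_sq, hzabs, Complex.norm_exp]
        simp
      have := aux_re_zero (Complex.exp (θ * Complex.I)) z habsθ
      simp [hf, Complex.re_ofReal_mul, this]
    have hIre : (∫ θ in (-θ₀)..(2 * π + θ₀), f θ).re = 0 := by
      by_cases hint : IntervalIntegrable f MeasureTheory.volume (-θ₀) (2 * π + θ₀)
      · have h := Complex.reCLM.intervalIntegral_comp_comm hint
        simp only [Complex.reCLM_apply] at h
        rw [← h]
        simp [hre]
      · rw [intervalIntegral.integral_undef hint]
        simp
    have hE : ((1 / (2 * (π : ℂ))) * ∫ θ in (-θ₀)..(2 * π + θ₀), f θ).re = 0 := by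
      have : (1 / (2 * (π : ℂ))) = ((1 / (2 * π) : ℝ) : ℂ) := by push_cast; ring
      rw [this, Complex.re_ofReal_mul, hIre, mul_zero]
    rw [hE, Real.exp_zero]
  rw [h1, h2, one_mul]
end

section
/- Let θ₀ ∈ (−π,0), z₀ = e^{iθ₀}, and c ∈ ℝ. Then for every complex z with |z| < 1, exp( (c/(2π)) ∫_{−θ₀}^{2π+θ₀} (e^{iθ}+z)/(e^{iθ}−z) dθ ) = ( −conj(z₀) · (z−z₀)/(z−conj(z₀)) )^{−ic/π}, where the complex power w ↦ w^{−ic/π} is taken with the principal branch of the logarithm (branch cut along the negative real axis). -/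
open scoped Real

namespace Stmt13Aux

open Complex

lemma aux_re {t : ℂ} (h : ‖t‖ < 1) : 0 < (1 - t).re := by
  have h1 : t.re ≤ ‖t‖ := Complex.re_le_norm t
  simp only [Complex.sub_re, Complex.one_re]
  linarith

lemma im_key (t : ℝ) (z : ℂ) :
    ((Complex.exp ((t:ℝ)*I) - z) / (1 - z*Complex.exp ((t:ℝ)*I))).im
    = (1 - Complex.normSq z) * Real.sin t / Complex.normSq (1 - z*Complex.exp ((t:ℝ)*I)) := by
  rw [Complex.div_im, div_sub_div_same]
  congr 1
  simp only [Complex.mul_re, Complex.mul_im, Complex.sub_re, Complex.sub_im, Complex.one_re,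
    Complex.one_im, Complex.exp_ofReal_mul_I_re, Complex.exp_ofReal_mul_I_im,
    Complex.normSq_apply]
  linear_combination z.im * (Real.sin_sq_add_cos_sq t)

end Stmt13Aux

open Stmt13Aux

/-- The Cauchy-type integral over the arc `{e^{iθ} : θ ∈ [−θ₀, 2π+θ₀]}` exponentiates to the
singular factor `(−conj(z₀)(z−z₀)/(z−conj(z₀)))^{−ic/π}` (principal branch), for `|z| < 1`. -/
theorem stmt_13 (θ₀ : ℝ) (hθ₀ : θ₀ ∈ Set.Ioo (-π) 0) (c : ℝ) (z : ℂ)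
    (hz : ‖z‖ < 1) :
    Complex.exp (((c : ℂ) / (2 * (π : ℂ))) * ∫ θ in (-θ₀)..(2 * π + θ₀),
        (Complex.exp (θ * Complex.I) + z) / (Complex.exp (θ * Complex.I) - z)) =
      (-(starRingEnd ℂ) (Complex.exp (θ₀ * Complex.I)) *
          (z - Complex.exp (θ₀ * Complex.I)) /
          (z - (starRingEnd ℂ) (Complex.exp (θ₀ * Complex.I)))) ^
        (-(Complex.I * (c : ℂ) / (π : ℂ))) := by
  obtain ⟨hθ1, hθ2⟩ := hθ₀
  have hπ : (0:ℝ) < π := Real.pi_pos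
  have hI : (Complex.I:ℂ)^2 = -1 := Complex.I_sq
  -- basic nonvanishing facts
  have habs : ∀ t : ℝ, ‖z * Complex.exp ((t:ℝ) * Complex.I)‖ < 1 := by
    intro t
    rw [norm_mul, Complex.norm_exp_ofReal_mul_I, mul_one]
    exact hz
  have hre : ∀ t : ℝ, 0 < (1 - z * Complex.exp ((t:ℝ) * Complex.I)).re :=
    fun t => aux_re (habs t)
  have hne : ∀ t : ℝ, (1 - z * Complex.exp ((t:ℝ) * Complex.I)) ≠ 0 := by
    intro t h
    have := hre t
    rw [h] at this
    simp at this
  have hslit : ∀ t : ℝ, (1 - z * Complex.exp ((t:ℝ)*Complex.I)) ∈ Complex.slitPlane :=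
    fun t => Or.inl (hre t)
  have hEz : ∀ t : ℝ, Complex.exp ((t:ℝ) * Complex.I) - z ≠ 0 := by
    intro t h
    have h2 : Complex.exp ((t:ℝ)*Complex.I) = z := sub_eq_zero.mp h
    have : ‖z‖ = 1 := by rw [← h2, Complex.norm_exp_ofReal_mul_I]
    rw [this] at hz
    exact lt_irrefl 1 hz
  have key : ∀ t : ℝ, Complex.exp ((t:ℝ)*Complex.I) * Complex.exp ((-t:ℝ)*Complex.I) = 1 := by
    intro t
    rw [← Complex.exp_add, show ((t:ℝ):ℂ)*Complex.I + ((-t:ℝ):ℂ)*Complex.I = 0 by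
      push_cast; ring, Complex.exp_zero]
  -- the antiderivative
  set F : ℝ → ℂ := fun θ => (θ:ℂ) - 2*Complex.I*Complex.log (1 - z * Complex.exp ((-θ:ℝ) * Complex.I)) with hF
  have hint : (∫ θ in (-θ₀)..(2*π+θ₀),
      (Complex.exp ((θ:ℝ) * Complex.I) + z) / (Complex.exp ((θ:ℝ) * Complex.I) - z))
      = F (2*π+θ₀) - F (-θ₀) := by
    apply intervalIntegral.integral_eq_sub_of_hasDerivAt
    · intro θ _
      have h1 : HasDerivAt (fun θ : ℝ => ((-θ : ℝ) : ℂ) * Complex.I) (-Complex.I) θ := by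
        simpa using ((hasDerivAt_id θ).neg.ofReal_comp.mul_const Complex.I)
      have h3 : HasDerivAt (fun θ : ℝ => 1 - z * Complex.exp ((-θ : ℝ) * Complex.I))
          (-(z * (Complex.exp ((-θ:ℝ) * Complex.I) * -Complex.I))) θ :=
        ((h1.cexp.const_mul z).const_sub 1)
      have h4 := (h3.clog_real (hslit (-θ))).const_mul (2*Complex.I)
      have h5 := ((hasDerivAt_id θ).ofReal_comp.sub h4)
      have heq : (1:ℂ) - 2*Complex.I*((-(z * (Complex.exp ((-θ:ℝ) * Complex.I) * -Complex.I)))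
            / (1 - z * Complex.exp ((-θ:ℝ) * Complex.I)))
          = (Complex.exp ((θ:ℝ)*Complex.I) + z)/(Complex.exp ((θ:ℝ)*Complex.I) - z) := by
        set E := Complex.exp ((θ:ℝ)*Complex.I) with hE
        set E' := Complex.exp ((-θ:ℝ)*Complex.I) with hE'
        have k : E * E' = 1 := key θ
        have h1' : E - z ≠ 0 := hEz θ
        have h2' : (1 - z * E') ≠ 0 := hne (-θ)
        field_simp
        linear_combination (2*z + z*E - z^2 + z^2 - z*E) * k +
          (-2*z*E'*E - 2*z*E'*E^2 + 2*z*E + 2*z^2*E' + 2*z^2*E'*E - 2*z^2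
           + 2*z*E'*E^2 - 2*z*E - 2*z^2*E'*E + 2*z^2) * hI
      have h6 : HasDerivAt F ((1:ℂ) - 2*Complex.I*((-(z * (Complex.exp ((-θ:ℝ) * Complex.I) * -Complex.I)))
            / (1 - z * Complex.exp ((-θ:ℝ) * Complex.I)))) θ := by
        simp only [id_eq, Complex.ofReal_one] at h5
        exact h5
      rw [heq] at h6
      exact h6
    · apply Continuous.intervalIntegrable
      apply Continuous.div
      · fun_prop
      · fun_prop
      · exact fun t => hEz t
  -- names for the two boundary logs
  set A : ℂ := 1 - z * Complex.exp ((-θ₀:ℝ) * Complex.I) with hA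
  set B : ℂ := 1 - z * Complex.exp ((θ₀:ℝ) * Complex.I) with hB
  have hA0 : A ≠ 0 := hne (-θ₀)
  have hB0 : B ≠ 0 := hne θ₀
  have hper : Complex.exp (((-(2*π+θ₀)):ℝ) * Complex.I) = Complex.exp (((-θ₀):ℝ) * Complex.I) := by
    rw [show (((-(2*π+θ₀)):ℝ):ℂ)*Complex.I = ((-θ₀:ℝ):ℂ)*Complex.I + (-(2*(π:ℂ)*Complex.I)) by
      push_cast; ring, Complex.exp_add, Complex.exp_neg, Complex.exp_two_pi_mul_I]
    simp
  have hFba : F (2*π+θ₀) - F (-θ₀)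
      = ((2*π+θ₀ : ℝ):ℂ) - 2*Complex.I*Complex.log A - (((-θ₀:ℝ):ℂ) - 2*Complex.I*Complex.log B) := by
    simp only [hF]
    rw [hper, show (-(-θ₀)) = θ₀ from neg_neg θ₀]
  -- conjugate of z₀
  have hconj : (starRingEnd ℂ) (Complex.exp ((θ₀:ℝ) * Complex.I)) = Complex.exp (((-θ₀):ℝ) * Complex.I) := by
    rw [← Complex.exp_conj]
    congr 1
    rw [map_mul, Complex.conj_I, Complex.conj_ofReal]
    push_cast
    ring
  -- the principal log of the base
  set L : ℂ := ((θ₀:ℂ) + (π:ℂ))*Complex.I + Complex.log A - Complex.log B with hL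
  have hwL : -Complex.exp (((-θ₀):ℝ)*Complex.I) * (z - Complex.exp ((θ₀:ℝ)*Complex.I))
      / (z - Complex.exp (((-θ₀):ℝ)*Complex.I)) = Complex.exp L := by
    have e1 : Complex.exp L = -Complex.exp ((θ₀:ℝ)*Complex.I) * A / B := by
      rw [hL, Complex.exp_sub, Complex.exp_add, Complex.exp_log hA0, Complex.exp_log hB0]
      congr 1
      congr 1
      rw [show ((θ₀:ℂ) + (π:ℂ))*Complex.I = (θ₀:ℝ)*Complex.I + (π:ℂ)*Complex.I by ring,
        Complex.exp_add, Complex.exp_pi_mul_I]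
      ring
    rw [e1]
    set E := Complex.exp ((θ₀:ℝ)*Complex.I) with hE
    set E' := Complex.exp ((-θ₀:ℝ)*Complex.I) with hE'
    have k : E * E' = 1 := key θ₀
    have hzE' : z - E' ≠ 0 := fun h => hEz (-θ₀) (by rw [← hE', sub_eq_zero.mp h]; simp)
    have hB0' : (1:ℂ) - z * E ≠ 0 := hB0
    field_simp
    linear_combination (z*E' - z*E) * k
  -- bounds on the imaginary part of L
  have hargA : |(Complex.log A).im| < π/2 := by
    rw [Complex.log_im]
    exact Complex.abs_arg_lt_pi_div_two_iff.mpr (Or.inl (hre (-θ₀)))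
  have hargB : |(Complex.log B).im| < π/2 := by
    rw [Complex.log_im]
    exact Complex.abs_arg_lt_pi_div_two_iff.mpr (Or.inl (hre θ₀))
  have hsin : Real.sin θ₀ < 0 := Real.sin_neg_of_neg_of_neg_pi_lt hθ2 hθ1
  have hnormSq : Complex.normSq z < 1 := by
    rw [← Complex.sq_norm]
    nlinarith [norm_nonneg z]
  have hexpeq : Complex.exp (Complex.log A - Complex.log B + (θ₀:ℝ) * Complex.I)
      = (Complex.exp ((θ₀:ℝ)*Complex.I) - z) / B := by
    rw [Complex.exp_add, Complex.exp_sub, Complex.exp_log hA0, Complex.exp_log hB0]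
    rw [hA]
    have key' : Complex.exp ((θ₀:ℂ)*Complex.I) * Complex.exp (-((θ₀:ℂ)*Complex.I)) = 1 := by
      rw [← Complex.exp_add, show ((θ₀:ℂ)*Complex.I + -((θ₀:ℂ)*Complex.I)) = 0 by ring,
        Complex.exp_zero]
    have key'' : Complex.exp ((θ₀:ℂ)*Complex.I) * Complex.exp (((-θ₀:ℝ):ℂ)*Complex.I) = 1 := key θ₀
    field_simp
    have e : Complex.exp (Complex.I * (θ₀:ℂ)) = Complex.exp ((θ₀:ℂ) * Complex.I) := by rw [mul_comm]
    rw [e]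
    linear_combination (-z) * key''
  have hexpim : (Complex.exp (Complex.log A - Complex.log B + (θ₀:ℝ) * Complex.I)).im < 0 := by
    rw [hexpeq, hB, im_key θ₀ z]
    apply div_neg_of_neg_of_pos
    · exact mul_neg_of_pos_of_neg (by linarith) hsin
    · exact Complex.normSq_pos.mpr (hne θ₀)
  set γ : ℝ := (Complex.log A).im - (Complex.log B).im + θ₀ with hγ
  have him : (Complex.log A - Complex.log B + (θ₀:ℝ) * Complex.I).im = γ := by
    simp [hγ, Complex.sub_im, Complex.add_im]
  have hsinγ : Real.sin γ < 0 := by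
    rw [Complex.exp_im, him] at hexpim
    by_contra h
    push_neg at h
    nlinarith [Real.exp_pos ((Complex.log A - Complex.log B + (θ₀:ℝ) * Complex.I).re)]
  have habsA := abs_lt.mp hargA
  have habsB := abs_lt.mp hargB
  have hγub : γ < θ₀ + π := by rw [hγ]; linarith [habsA.2, habsB.1]
  have hγlb : θ₀ - π < γ := by rw [hγ]; linarith [habsA.1, habsB.2]
  have hγneg : γ < 0 := by
    by_contra h
    push_neg at h
    have : Real.sin γ ≥ 0 := Real.sin_nonneg_of_nonneg_of_le_pi h (by linarith)
    linarith
  have hLim : L.im = γ + π := by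
    simp only [hL, Complex.add_im, Complex.sub_im, Complex.mul_I_im, Complex.add_re,
      Complex.ofReal_re]
    rw [hγ]; ring
  have hL1 : -π < L.im := by rw [hLim]; linarith
  have hL2 : L.im ≤ π := by rw [hLim]; linarith
  -- finish
  rw [hint, hFba, hconj, hwL, Complex.cpow_def_of_ne_zero (Complex.exp_ne_zero L),
    Complex.log_exp hL1 hL2]
  congr 1
  rw [hL]
  have hπc : ((π:ℝ):ℂ) ≠ 0 := Complex.ofReal_ne_zero.mpr hπ.ne'
  push_cast
  field_simp
  ring_nf
  linear_combination (2*(c:ℂ)*(π:ℂ) + 2*(c:ℂ)*(θ₀:ℂ)) * hI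
end

section
/- Let l ∈ ℕ and let R̂ : ℤ → ℂ satisfy Σ_{k∈ℤ} |R̂(k)| < ∞ and Σ_{k≥1} k^l |R̂(−k)| < ∞. Fix 0 < ε < 1 and 0 < β₀ < β, and for t > 0 set K(t) = ⌊ β₀ t / (−log(1−ε)) ⌋. Then: (i) for every t > 0 and every complex z with 1−ε ≤ |z| ≤ 1, the series R_{a,t}(z) = Σ_{k ≥ −K(t)} R̂(k) z^k converges absolutely and satisfies |R_{a,t}(z)| e^{−βt} ≤ (Σ_{k∈ℤ} |R̂(k)|) · e^{−(β−β₀)t}; (ii) for every t > 0 with K(t) ≥ 1 and every z with |z| = 1, the remainder R_{r,t}(z) = Σ_{k ≤ −K(t)−1} R̂(k) z^k satisfies |R_{r,t}(z)| ≤ K(t)^{−l} · Σ_{k≥1} k^l |R̂(−k)|; in particular |R_{r,t}(z)| = O(t^{−l}) as t → ∞, uniformly on |z| = 1. -/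
/-- Analytic approximation of the reflection coefficient: splitting the Fourier series of `R`
at `k = −K(t)`, `K(t) = ⌊β₀t/(−log(1−ε))⌋`, the analytic part `R_{a,t}(z) = Σ_{k≥−K(t)} R̂(k)z^k`
converges absolutely on `1−ε ≤ |z| ≤ 1` with `|R_{a,t}(z)|e^{−βt} ≤ ‖R̂‖₁ e^{−(β−β₀)t}`, and the
remainder `R_{r,t}(z) = Σ_{k≤−K(t)−1} R̂(k)z^k` satisfies
`|R_{r,t}(z)| ≤ K(t)^{−l} Σ_{k≥1} k^l |R̂(−k)|` on the unit circle; in particular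
`R_{r,t} = O(t^{−l})` uniformly on `|z| = 1`. -/
theorem stmt_14 (l : ℕ) (R : ℤ → ℂ)
    (hR1 : Summable fun k : ℤ => ‖R k‖)
    (hR2 : Summable fun k : ℕ => (k : ℝ) ^ l * ‖R (-(k : ℤ))‖)
    (ε β₀ β : ℝ) (hε : 0 < ε) (hε1 : ε < 1) (hβ₀ : 0 < β₀) (hβ : β₀ < β)
    (K : ℝ → ℕ) (hK : ∀ t, K t = ⌊β₀ * t / (-Real.log (1 - ε))⌋₊) :
    (∀ t : ℝ, 0 < t → ∀ z : ℂ, 1 - ε ≤ ‖z‖ → ‖z‖ ≤ 1 →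
      (Summable fun j : ℕ => ‖R ((j : ℤ) - (K t : ℤ)) * z ^ ((j : ℤ) - (K t : ℤ))‖) ∧
      ‖∑' j : ℕ, R ((j : ℤ) - (K t : ℤ)) * z ^ ((j : ℤ) - (K t : ℤ))‖ * Real.exp (-(β * t)) ≤
        (∑' k : ℤ, ‖R k‖) * Real.exp (-((β - β₀) * t))) ∧
    (∀ t : ℝ, 0 < t → 1 ≤ K t → ∀ z : ℂ, ‖z‖ = 1 →
      ‖∑' j : ℕ, R (-(K t : ℤ) - 1 - (j : ℤ)) * z ^ (-(K t : ℤ) - 1 - (j : ℤ))‖ ≤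
        (∑' k : ℕ, (k : ℝ) ^ l * ‖R (-(k : ℤ))‖) / (K t : ℝ) ^ l) ∧
    (∃ Cst t₀ : ℝ, ∀ t : ℝ, t₀ ≤ t → ∀ z : ℂ, ‖z‖ = 1 →
      ‖∑' j : ℕ, R (-(K t : ℤ) - 1 - (j : ℤ)) * z ^ (-(K t : ℤ) - 1 - (j : ℤ))‖ ≤
        Cst / t ^ l) := by
  have h1ε : (0:ℝ) < 1 - ε := by linarith
  set L : ℝ := -Real.log (1 - ε) with hLdef
  have hL0 : 0 < L := by
    have := Real.log_neg h1ε (by linarith)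
    simp only [hLdef]; linarith
  -- nonnegativity of the two sums
  have hS0 : 0 ≤ ∑' k : ℤ, ‖R k‖ := tsum_nonneg fun _ => norm_nonneg _
  have hSl0 : 0 ≤ ∑' k : ℕ, (k : ℝ) ^ l * ‖R (-(k : ℤ))‖ :=
    tsum_nonneg fun k => mul_nonneg (by positivity) (norm_nonneg _)
  -- Part (ii) proved first so it can be reused in (iii)
  have part2 : ∀ t : ℝ, 0 < t → 1 ≤ K t → ∀ z : ℂ, ‖z‖ = 1 →
      ‖∑' j : ℕ, R (-(K t : ℤ) - 1 - (j : ℤ)) * z ^ (-(K t : ℤ) - 1 - (j : ℤ))‖ ≤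
        (∑' k : ℕ, (k : ℝ) ^ l * ‖R (-(k : ℤ))‖) / (K t : ℝ) ^ l := by
    intro t ht hK1 z hz
    have hz' : ‖z‖ = 1 := by exact hz
    have hKpos : (0:ℝ) < (K t : ℝ) ^ l := by positivity
    have hinj : Function.Injective fun j : ℕ => -(K t : ℤ) - 1 - (j : ℤ) := by
      intro a b h; simp only at h; omega
    have hnorm : ∀ j : ℕ, ‖R (-(K t : ℤ) - 1 - (j : ℤ)) * z ^ (-(K t : ℤ) - 1 - (j : ℤ))‖ =
        ‖R (-(K t : ℤ) - 1 - (j : ℤ))‖ := by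
      intro j
      rw [norm_mul, norm_zpow, hz', one_zpow, mul_one]
    have hsum : Summable fun j : ℕ => ‖R (-(K t : ℤ) - 1 - (j : ℤ))‖ :=
      hR1.comp_injective hinj
    have hsum' : Summable fun j : ℕ =>
        ((K t + 1 + j : ℕ) : ℝ) ^ l * ‖R (-((K t + 1 + j : ℕ) : ℤ))‖ :=
      hR2.comp_injective (fun a b h => by omega)
    have harg : ∀ j : ℕ, -(K t : ℤ) - 1 - (j : ℤ) = -((K t + 1 + j : ℕ) : ℤ) := by
      intro j; push_cast; ring
    calc ‖∑' j : ℕ, R (-(K t : ℤ) - 1 - (j : ℤ)) * z ^ (-(K t : ℤ) - 1 - (j : ℤ))‖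
        ≤ ∑' j : ℕ, ‖R (-(K t : ℤ) - 1 - (j : ℤ)) * z ^ (-(K t : ℤ) - 1 - (j : ℤ))‖ :=
          norm_tsum_le_tsum_norm (by simpa only [hnorm] using hsum)
      _ = ∑' j : ℕ, ‖R (-(K t : ℤ) - 1 - (j : ℤ))‖ := by simp only [hnorm]
      _ ≤ ∑' j : ℕ, ((K t + 1 + j : ℕ) : ℝ) ^ l * ‖R (-((K t + 1 + j : ℕ) : ℤ))‖
            / (K t : ℝ) ^ l := by
          refine Summable.tsum_le_tsum (fun j => ?_) hsum (hsum'.div_const _)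
          rw [harg j, le_div_iff₀ hKpos]
          have h1 : ((K t : ℝ)) ^ l ≤ ((K t + 1 + j : ℕ) : ℝ) ^ l := by
            apply pow_le_pow_left₀ (by positivity)
            push_cast; linarith [Nat.cast_nonneg (α := ℝ) j]
          calc ‖R (-((K t + 1 + j : ℕ) : ℤ))‖ * (K t : ℝ) ^ l
              ≤ ‖R (-((K t + 1 + j : ℕ) : ℤ))‖ * ((K t + 1 + j : ℕ) : ℝ) ^ l :=
                mul_le_mul_of_nonneg_left h1 (norm_nonneg _)
            _ = ((K t + 1 + j : ℕ) : ℝ) ^ l * ‖R (-((K t + 1 + j : ℕ) : ℤ))‖ := by ring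
      _ = (∑' j : ℕ, ((K t + 1 + j : ℕ) : ℝ) ^ l * ‖R (-((K t + 1 + j : ℕ) : ℤ))‖)
            / (K t : ℝ) ^ l := by rw [tsum_div_const]
      _ ≤ (∑' k : ℕ, (k : ℝ) ^ l * ‖R (-(k : ℤ))‖) / (K t : ℝ) ^ l := by
          gcongr ?_ / _
          exact Summable.tsum_le_tsum_of_inj (fun j : ℕ => K t + 1 + j) (fun a b h => by simp only at h; omega)
            (fun c _ => mul_nonneg (by positivity) (norm_nonneg _))
            (fun j => le_rfl) hsum' hR2
  refine ⟨?_, part2, ?_⟩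
  · -- Part (i)
    intro t ht z hz1 hz2
    have hz1' : 1 - ε ≤ ‖z‖ := by exact hz1
    have hz2' : ‖z‖ ≤ 1 := by exact hz2
    have hz0 : (0:ℝ) < ‖z‖ := lt_of_lt_of_le h1ε hz1'
    set C : ℝ := (1 - ε) ^ (-(K t : ℤ)) with hCdef
    have hC0 : 0 < C := by positivity
    have hbound : ∀ j : ℕ, ‖R ((j : ℤ) - (K t : ℤ)) * z ^ ((j : ℤ) - (K t : ℤ))‖ ≤
        ‖R ((j : ℤ) - (K t : ℤ))‖ * C := by
      intro j
      rw [norm_mul, norm_zpow]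
      apply mul_le_mul_of_nonneg_left ?_ (norm_nonneg _)
      calc ‖z‖ ^ ((j : ℤ) - (K t : ℤ))
          ≤ ‖z‖ ^ (-(K t : ℤ)) :=
            zpow_le_zpow_right_of_le_one₀ hz0 hz2' (by omega)
        _ ≤ C := by
            rw [hCdef, zpow_neg, zpow_neg, zpow_natCast, zpow_natCast]
            apply inv_anti₀ (by positivity)
            exact pow_le_pow_left₀ h1ε.le hz1' _
    have hinj : Function.Injective fun j : ℕ => (j : ℤ) - (K t : ℤ) := by
      intro a b h; simp only at h; omega
    have hsumR : Summable fun j : ℕ => ‖R ((j : ℤ) - (K t : ℤ))‖ :=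
      hR1.comp_injective hinj
    have hsum : Summable fun j : ℕ => ‖R ((j : ℤ) - (K t : ℤ)) * z ^ ((j : ℤ) - (K t : ℤ))‖ :=
      Summable.of_nonneg_of_le (fun j => norm_nonneg _) hbound (hsumR.mul_right C)
    refine ⟨hsum, ?_⟩
    have hCexp : C ≤ Real.exp (β₀ * t) := by
      have hx0 : 0 ≤ β₀ * t / L := by positivity
      have hfloor : (K t : ℝ) * L ≤ β₀ * t := by
        rw [hK]
        have h1 : ((⌊β₀ * t / L⌋₊ : ℕ) : ℝ) ≤ β₀ * t / L := Nat.floor_le hx0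
        calc ((⌊β₀ * t / L⌋₊ : ℕ) : ℝ) * L ≤ (β₀ * t / L) * L :=
              mul_le_mul_of_nonneg_right h1 hL0.le
          _ = β₀ * t := by field_simp
      have hCeq : C = Real.exp ((K t : ℝ) * L) := by
        rw [hCdef, zpow_neg, zpow_natCast, ← Real.exp_log h1ε, ← Real.exp_nat_mul,
          ← Real.exp_neg]
        congr 1
        simp only [hLdef]; ring
      rw [hCeq]
      exact Real.exp_le_exp.mpr hfloor
    calc ‖∑' j : ℕ, R ((j : ℤ) - (K t : ℤ)) * z ^ ((j : ℤ) - (K t : ℤ))‖ * Real.exp (-(β * t))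
        ≤ (∑' j : ℕ, ‖R ((j : ℤ) - (K t : ℤ)) * z ^ ((j : ℤ) - (K t : ℤ))‖) *
            Real.exp (-(β * t)) :=
          mul_le_mul_of_nonneg_right (norm_tsum_le_tsum_norm hsum) (Real.exp_pos _).le
      _ ≤ ((∑' j : ℕ, ‖R ((j : ℤ) - (K t : ℤ))‖) * C) * Real.exp (-(β * t)) := by
          apply mul_le_mul_of_nonneg_right ?_ (Real.exp_pos _).le
          rw [← tsum_mul_right]
          exact Summable.tsum_le_tsum hbound hsum (hsumR.mul_right C)
      _ ≤ ((∑' k : ℤ, ‖R k‖) * Real.exp (β₀ * t)) * Real.exp (-(β * t)) := by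
          apply mul_le_mul_of_nonneg_right ?_ (Real.exp_pos _).le
          apply mul_le_mul ?_ hCexp hC0.le hS0
          exact Summable.tsum_le_tsum_of_inj _ hinj (fun c _ => norm_nonneg _)
            (fun j => le_rfl) hsumR hR1
      _ = (∑' k : ℤ, ‖R k‖) * Real.exp (-((β - β₀) * t)) := by
          rw [mul_assoc, ← Real.exp_add]; ring_nf
  · -- Part (iii)
    refine ⟨(∑' k : ℕ, (k : ℝ) ^ l * ‖R (-(k : ℤ))‖) / (β₀ / (2 * L)) ^ l,
      2 * L / β₀, fun t ht z hz => ?_⟩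
    have ht0 : 0 < t := lt_of_lt_of_le (by positivity) ht
    have hx2 : (2:ℝ) ≤ β₀ * t / L := by
      rw [le_div_iff₀ hL0]
      calc (2:ℝ) * L = β₀ * (2 * L / β₀) := by field_simp
        _ ≤ β₀ * t := by nlinarith
    have hK1 : 1 ≤ K t := by
      rw [hK]
      exact Nat.le_floor (by push_cast; linarith)
    have hKhalf : β₀ * t / (2 * L) ≤ (K t : ℝ) := by
      rw [hK]
      have h1 : β₀ * t / L - 1 < (⌊β₀ * t / L⌋₊ : ℝ) := Nat.sub_one_lt_floor _
      have h2 : β₀ * t / (2 * L) = (β₀ * t / L) / 2 := by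
        rw [div_div]; ring_nf
      linarith
    have hKl : (β₀ / (2 * L)) ^ l * t ^ l ≤ (K t : ℝ) ^ l := by
      rw [← mul_pow]
      apply pow_le_pow_left₀ (by positivity)
      calc β₀ / (2 * L) * t = β₀ * t / (2 * L) := by ring
        _ ≤ (K t : ℝ) := hKhalf
    calc ‖∑' j : ℕ, R (-(K t : ℤ) - 1 - (j : ℤ)) * z ^ (-(K t : ℤ) - 1 - (j : ℤ))‖
        ≤ (∑' k : ℕ, (k : ℝ) ^ l * ‖R (-(k : ℤ))‖) / (K t : ℝ) ^ l := part2 t ht0 hK1 z hz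
      _ ≤ (∑' k : ℕ, (k : ℝ) ^ l * ‖R (-(k : ℤ))‖) / ((β₀ / (2 * L)) ^ l * t ^ l) := by
          exact div_le_div_of_nonneg_left hSl0 (by positivity) hKl
      _ = (∑' k : ℕ, (k : ℝ) ^ l * ‖R (-(k : ℤ))‖) / (β₀ / (2 * L)) ^ l / t ^ l := by
          rw [div_div]
end

section
/- Let ρ₀ > 0, C > 0, L > 0, α ∈ (0,1], r ∈ ℂ with |r| ≤ 1. Let Φ be a complex-valued function defined for |z| ≤ ρ₀ with Φ(0) purely imaginary, satisfying |Φ(z) − Φ(0) − i z²/2| ≤ C|z|³ for all |z| ≤ ρ₀ and Re(Φ(z)) ≥ |z|²/4 for z = u e^{−iπ/4} with u ∈ [0, ρ₀]; assume in addition C ρ₀ ≤ 1/8. Let R₁ be a complex-valued function with |R₁(z) − conj(r)| ≤ L|z|^α for z = u e^{−iπ/4}, u ∈ [0, ρ₀]. Then there exists a constant C′ > 0, depending only on C, L, α and ρ₀, such that for all t ≥ 1 and all u ∈ [0, ρ₀ t^{1/2}], setting z = u e^{−iπ/4}: | R₁(z t^{−1/2}) · exp(−t(Φ(z t^{−1/2})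 − Φ(0))) − conj(r) · exp(−i z²/2) | ≤ C′ t^{−α/2} e^{−u²/8}. -/
open scoped Real

lemma aux_exp_lip (w₁ w₂ : ℂ) (B : ℝ) (h1 : w₁.re ≤ B) (h2 : w₂.re ≤ B) :
    norm (Complex.exp w₁ - Complex.exp w₂) ≤ Real.exp B * norm (w₁ - w₂) := by
  have := Convex.norm_image_sub_le_of_norm_deriv_le (f := Complex.exp)
    (s := segment ℝ w₂ w₁) (C := Real.exp B)
    (fun x _ => Complex.differentiable_exp.differentiableAt)
    (fun x hx => by
      rw [Complex.deriv_exp, Complex.norm_exp]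
      apply Real.exp_le_exp.2
      obtain ⟨a, b, ha, hb, hab, rfl⟩ := hx
      have : (a • w₂ + b • w₁).re = a * w₂.re + b * w₁.re := by
        simp [Complex.add_re, Complex.real_smul, Complex.re_ofReal_mul]
      rw [this]
      have e1 : a * w₂.re ≤ a * B := mul_le_mul_of_nonneg_left h2 ha
      have e2 : b * w₁.re ≤ b * B := mul_le_mul_of_nonneg_left h1 hb
      have e3 : a * B + b * B = B := by rw [← add_mul, hab, one_mul]
      linarith)
    (convex_segment _ _) (left_mem_segment ℝ w₂ w₁) (right_mem_segment ℝ w₂ w₁)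
  simpa using this

lemma aux_pow_exp (u α : ℝ) (hu : 0 ≤ u) (hα : 0 < α) (hα1 : α ≤ 1) :
    u ^ α * Real.exp (-(u ^ 2) / 8) ≤ 3 := by
  have hE : (0:ℝ) < Real.exp (-(u ^ 2) / 8) := Real.exp_pos _
  have h1 : u ^ α ≤ 1 + u := by
    rcases le_or_gt u 1 with h | h
    · have := Real.rpow_le_one hu h hα.le
      linarith
    · have h2 : u ^ α ≤ u ^ (1:ℝ) := Real.rpow_le_rpow_of_exponent_le h.le hα1
      rw [Real.rpow_one] at h2
      linarith
  have hq : 1 + u ≤ 3 * (1 + u ^ 2 / 8) := by nlinarith [sq_nonneg (u - 4/3)]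
  have hx : (1:ℝ) + u ^ 2 / 8 ≤ Real.exp (u ^ 2 / 8) := by
    linarith [Real.add_one_le_exp (u ^ 2 / 8)]
  have hEmul : Real.exp (u ^ 2 / 8) * Real.exp (-(u ^ 2) / 8) = 1 := by
    rw [← Real.exp_add]; ring_nf; exact Real.exp_zero
  calc u ^ α * Real.exp (-(u ^ 2) / 8)
      ≤ (3 * Real.exp (u ^ 2 / 8)) * Real.exp (-(u ^ 2) / 8) := by
        apply mul_le_mul_of_nonneg_right _ hE.le
        linarith
    _ = 3 := by rw [mul_assoc, hEmul, mul_one]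

lemma aux_cube_exp (u : ℝ) (hu : 0 ≤ u) :
    u ^ 3 * Real.exp (-(u ^ 2) / 8) ≤ 61 := by
  have hE : (0:ℝ) < Real.exp (-(u ^ 2) / 8) := Real.exp_pos _
  have h1 : (1:ℝ) + u ^ 2 / 24 ≤ Real.exp (u ^ 2 / 24) := by
    linarith [Real.add_one_le_exp (u ^ 2 / 24)]
  have h2 : ((1:ℝ) + u ^ 2 / 24) ^ 3 ≤ Real.exp (u ^ 2 / 24) ^ 3 :=
    pow_le_pow_left₀ (by positivity) h1 3
  have h3 : Real.exp (u ^ 2 / 24) ^ 3 = Real.exp (u ^ 2 / 8) := by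
    rw [← Real.exp_nat_mul]; push_cast; ring_nf
  have key : u ^ 3 ≤ 61 * Real.exp (u ^ 2 / 8) := by
    rw [← h3]
    nlinarith [sq_nonneg (u ^ 3 - 118), sq_nonneg u, pow_nonneg hu 3, sq_nonneg (u^2)]
  have hEmul : Real.exp (u ^ 2 / 8) * Real.exp (-(u ^ 2) / 8) = 1 := by
    rw [← Real.exp_add]; ring_nf; exact Real.exp_zero
  calc u ^ 3 * Real.exp (-(u ^ 2) / 8)
      ≤ (61 * Real.exp (u ^ 2 / 8)) * Real.exp (-(u ^ 2) / 8) :=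
        mul_le_mul_of_nonneg_right key hE.le
    _ = 61 := by rw [mul_assoc, hEmul, mul_one]

/-- Estimate comparing, on the ray `Σ₁ = {u e^{−iπ/4} : u ≥ 0}` of the rescaled small cross,
the jump entry `R₁(z t^{−1/2}) e^{−t(Φ(z t^{−1/2})−Φ(0))}` with the model entry
`conj(r) e^{−iz²/2}`: the difference is `O(t^{−α/2} e^{−u²/8})`. -/
theorem stmt_16 (ρ₀ C L α : ℝ) (r : ℂ)
    (hρ₀ : 0 < ρ₀) (hC : 0 < C) (hL : 0 < L) (hα : 0 < α) (hα1 : α ≤ 1)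
    (hr : norm r ≤ 1)
    (Φ : ℂ → ℂ) (hΦ0 : (Φ 0).re = 0)
    (hΦ2 : ∀ z : ℂ, norm z ≤ ρ₀ →
      norm (Φ z - Φ 0 - Complex.I * z ^ 2 / 2) ≤ C * norm z ^ 3)
    (hΦ1 : ∀ u : ℝ, 0 ≤ u → u ≤ ρ₀ →
      u ^ 2 / 4 ≤ (Φ ((u : ℂ) * Complex.exp (-((π : ℂ) / 4) * Complex.I))).re)
    (hCρ : C * ρ₀ ≤ 1 / 8)
    (R₁ : ℂ → ℂ)
    (hR₁ : ∀ u : ℝ, 0 ≤ u → u ≤ ρ₀ →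
      norm (R₁ ((u : ℂ) * Complex.exp (-((π : ℂ) / 4) * Complex.I)) -
        (starRingEnd ℂ) r) ≤ L * u ^ α) :
    ∃ C' : ℝ, 0 < C' ∧ ∀ t : ℝ, 1 ≤ t → ∀ u : ℝ, 0 ≤ u → u ≤ ρ₀ * Real.sqrt t →
      norm
          (R₁ (((u / Real.sqrt t : ℝ) : ℂ) * Complex.exp (-((π : ℂ) / 4) * Complex.I)) *
              Complex.exp (-(t : ℂ) *
                (Φ (((u / Real.sqrt t : ℝ) : ℂ) * Complex.exp (-((π : ℂ) / 4) * Complex.I)) -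
                  Φ 0)) -
            (starRingEnd ℂ) r *
              Complex.exp (-(Complex.I *
                ((u : ℂ) * Complex.exp (-((π : ℂ) / 4) * Complex.I)) ^ 2 / 2))) ≤
        C' * t ^ (-(α / 2)) * Real.exp (-(u ^ 2) / 8) := by
  refine ⟨3 * L + 61 * C, by positivity, ?_⟩
  intro t ht u hu hut
  set e : ℂ := Complex.exp (-((π : ℂ) / 4) * Complex.I) with he
  have hsqt : (1:ℝ) ≤ Real.sqrt t := by
    rw [show (1:ℝ) = Real.sqrt 1 by simp]
    exact Real.sqrt_le_sqrt ht
  have hsqt0 : (0:ℝ) < Real.sqrt t := lt_of_lt_of_le one_pos hsqt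
  have ht0 : (0:ℝ) < t := lt_of_lt_of_le one_pos ht
  set s : ℝ := u / Real.sqrt t with hsdef
  have hs0 : 0 ≤ s := div_nonneg hu hsqt0.le
  have hsρ : s ≤ ρ₀ := by
    rw [hsdef, div_le_iff₀ hsqt0]; exact hut
  have hsq : Real.sqrt t ^ 2 = t := Real.sq_sqrt ht0.le
  have hsu : s * Real.sqrt t = u := by
    rw [hsdef]; exact div_mul_cancel₀ u hsqt0.ne'
  have h3 : s ^ 2 * t = u ^ 2 := by
    calc s ^ 2 * t = (s * Real.sqrt t) ^ 2 := by rw [mul_pow, hsq]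
      _ = u ^ 2 := by rw [hsu]
  have habse : norm e = 1 := by
    rw [he, Complex.norm_exp]; norm_num
  have he2 : e ^ 2 = -Complex.I := by
    rw [he, ← Complex.exp_nat_mul]
    have h : ((2:ℕ):ℂ) * (-((π : ℂ) / 4) * Complex.I) = -((π:ℂ)/2) * Complex.I := by
      push_cast; ring
    rw [h]
    have h2 : -((π:ℂ)/2) * Complex.I = (-((π:ℂ)/2)) * Complex.I := by ring
    rw [h2, Complex.exp_mul_I]
    simp [Complex.cos_pi_div_two, Complex.sin_pi_div_two]
  set ζ : ℂ := ((s : ℝ) : ℂ) * e with hζ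
  have habsζ : norm ζ = s := by
    rw [hζ, norm_mul, habse, Complex.norm_real, Real.norm_eq_abs, abs_of_nonneg hs0, mul_one]
  set w₁ : ℂ := -(t : ℂ) * (Φ ζ - Φ 0) with hw₁
  set w₂ : ℂ := -(Complex.I * ((u : ℂ) * e) ^ 2 / 2) with hw₂
  have hc : ((u:ℂ))^2 = (t:ℂ) * ((s:ℂ))^2 := by
    have h4 : (u^2 : ℝ) = t * s^2 := by rw [← h3]; ring
    exact_mod_cast congrArg (Complex.ofReal) h4
  have hw₂eq : w₂ = -(((u:ℂ))^2) / 2 := by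
    rw [hw₂, mul_pow, he2]
    linear_combination (((u:ℂ))^2/2) * Complex.I_sq
  have hΦre : s ^ 2 / 4 ≤ (Φ ζ).re := hΦ1 s hs0 hsρ
  have hrew₁ : w₁.re ≤ -(u ^ 2) / 4 := by
    have hh : w₁ = ((-t : ℝ) : ℂ) * (Φ ζ - Φ 0) := by rw [hw₁]; push_cast; ring
    rw [hh, Complex.re_ofReal_mul, Complex.sub_re, hΦ0, sub_zero]
    have h1 : -t * (Φ ζ).re ≤ -t * (s ^ 2 / 4) :=
      mul_le_mul_of_nonpos_left hΦre (by linarith)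
    nlinarith [h3]
  have hrew₂ : w₂.re ≤ -(u ^ 2) / 4 := by
    have hh : w₂ = (((-(u^2)/2 : ℝ)) : ℂ) := by rw [hw₂eq]; push_cast; ring
    rw [hh, Complex.ofReal_re]
    nlinarith [sq_nonneg u]
  have hIζ : Complex.I * ζ^2 / 2 = ((s:ℂ))^2 / 2 := by
    rw [hζ, mul_pow, he2]
    linear_combination (-((s:ℂ))^2/2) * Complex.I_sq
  have hdiff : w₁ - w₂ = -(t:ℂ) * (Φ ζ - Φ 0 - Complex.I * ζ^2/2) := by
    rw [hw₁, hw₂eq, mul_sub, hIζ]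
    linear_combination ((1:ℂ)/2) * hc
  have habsdiff : norm (w₁ - w₂) ≤ C * u^3 / Real.sqrt t := by
    rw [hdiff, norm_mul]
    have h5 : norm (-(t:ℂ)) = t := by
      rw [norm_neg, Complex.norm_real, Real.norm_eq_abs, abs_of_pos ht0]
    rw [h5]
    have h6 := hΦ2 ζ (by rw [habsζ]; exact hsρ)
    rw [habsζ] at h6
    have h8 : u^3 = s^3 * Real.sqrt t * t := by
      calc u^3 = (s * Real.sqrt t)^3 := by rw [hsu]
        _ = s^3 * Real.sqrt t * ((Real.sqrt t)^2) := by ring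
        _ = s^3 * Real.sqrt t * t := by rw [hsq]
    have h7 : t * (C * s^3) = C * u^3 / Real.sqrt t := by
      rw [h8]; field_simp
    calc t * norm (Φ ζ - Φ 0 - Complex.I * ζ^2/2)
        ≤ t * (C * s^3) := mul_le_mul_of_nonneg_left h6 ht0.le
      _ = C * u^3 / Real.sqrt t := h7
  have hexp1 : norm (Complex.exp w₁) ≤ Real.exp (-(u^2)/4) := by
    rw [Complex.norm_exp]; exact Real.exp_le_exp.2 hrew₁
  have hexpdiff : norm (Complex.exp w₁ - Complex.exp w₂) ≤
      Real.exp (-(u^2)/4) * (C * u^3 / Real.sqrt t) :=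
    (aux_exp_lip w₁ w₂ _ hrew₁ hrew₂).trans
      (mul_le_mul_of_nonneg_left habsdiff (Real.exp_pos _).le)
  have hR : norm (R₁ ζ - (starRingEnd ℂ) r) ≤ L * s ^ α := hR₁ s hs0 hsρ
  have hrbar : norm ((starRingEnd ℂ) r) ≤ 1 := by
    rw [Complex.norm_conj]; exact hr
  -- numeric facts
  have hP0 : (0:ℝ) < t ^ (-(α/2)) := Real.rpow_pos_of_pos ht0 _
  have hE8 : (0:ℝ) < Real.exp (-(u^2)/8) := Real.exp_pos _
  have hE4eq : Real.exp (-(u^2)/4) = Real.exp (-(u^2)/8) * Real.exp (-(u^2)/8) := by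
    rw [← Real.exp_add]; ring_nf
  have hsα : s ^ α = u ^ α * t ^ (-(α/2)) := by
    rw [hsdef, Real.div_rpow hu hsqt0.le, Real.sqrt_eq_rpow, ← Real.rpow_mul ht0.le,
      show (1/2)*α = α/2 by ring, Real.rpow_neg ht0.le, div_eq_mul_inv]
  have hts : 1 / Real.sqrt t ≤ t ^ (-(α/2)) := by
    have h1 : (1:ℝ)/Real.sqrt t = t ^ (-(1/2) : ℝ) := by
      rw [Real.rpow_neg ht0.le, Real.sqrt_eq_rpow, one_div]
    rw [h1]
    exact Real.rpow_le_rpow_of_exponent_le ht (by linarith)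
  have hEa := aux_pow_exp u α hu hα hα1
  have hEc := aux_cube_exp u hu
  have hsplit : R₁ ζ * Complex.exp w₁ - (starRingEnd ℂ) r * Complex.exp w₂ =
      (R₁ ζ - (starRingEnd ℂ) r) * Complex.exp w₁ +
        (starRingEnd ℂ) r * (Complex.exp w₁ - Complex.exp w₂) := by ring
  calc norm (R₁ ζ * Complex.exp w₁ - (starRingEnd ℂ) r * Complex.exp w₂)
      ≤ norm ((R₁ ζ - (starRingEnd ℂ) r) * Complex.exp w₁) +
        norm ((starRingEnd ℂ) r * (Complex.exp w₁ - Complex.exp w₂)) := by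
        rw [hsplit]; exact norm_add_le _ _
    _ = norm (R₁ ζ - (starRingEnd ℂ) r) * norm (Complex.exp w₁) +
        norm ((starRingEnd ℂ) r) *
          norm (Complex.exp w₁ - Complex.exp w₂) := by rw [norm_mul, norm_mul]
    _ ≤ (L * s ^ α) * Real.exp (-(u^2)/4) +
        1 * (Real.exp (-(u^2)/4) * (C * u^3 / Real.sqrt t)) := by
        exact add_le_add
          (mul_le_mul hR hexp1 (norm_nonneg _)
            (mul_nonneg hL.le (Real.rpow_nonneg hs0 α)))
          (mul_le_mul hrbar hexpdiff (norm_nonneg _) one_pos.le)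
    _ ≤ (3 * L + 61 * C) * t ^ (-(α/2)) * Real.exp (-(u ^ 2) / 8) := by
        rw [hsα, hE4eq, one_mul]
        have t1 : L * (u ^ α * t ^ (-(α/2))) *
            (Real.exp (-(u^2)/8) * Real.exp (-(u^2)/8)) ≤
            3 * L * (t ^ (-(α/2)) * Real.exp (-(u^2)/8)) := by
          have := mul_le_mul_of_nonneg_right
            (mul_le_mul_of_nonneg_left hEa hL.le)
            (mul_nonneg hP0.le hE8.le)
          calc L * (u ^ α * t ^ (-(α/2))) *
              (Real.exp (-(u^2)/8) * Real.exp (-(u^2)/8))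
              = L * (u ^ α * Real.exp (-(u^2)/8)) *
                (t ^ (-(α/2)) * Real.exp (-(u^2)/8)) := by ring
            _ ≤ L * 3 * (t ^ (-(α/2)) * Real.exp (-(u^2)/8)) := this
            _ = 3 * L * (t ^ (-(α/2)) * Real.exp (-(u^2)/8)) := by ring
        have t2 : Real.exp (-(u^2)/8) * Real.exp (-(u^2)/8) *
            (C * u^3 / Real.sqrt t) ≤
            61 * C * (t ^ (-(α/2)) * Real.exp (-(u^2)/8)) := by
          have s1 : C * u^3 / Real.sqrt t ≤ C * u^3 * t ^ (-(α/2)) := by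
            rw [div_eq_mul_inv, ← one_div]
            exact mul_le_mul_of_nonneg_left hts (by positivity)
          calc Real.exp (-(u^2)/8) * Real.exp (-(u^2)/8) * (C * u^3 / Real.sqrt t)
              ≤ Real.exp (-(u^2)/8) * Real.exp (-(u^2)/8) *
                (C * u^3 * t ^ (-(α/2))) := by
                exact mul_le_mul_of_nonneg_left s1 (by positivity)
            _ = C * (u^3 * Real.exp (-(u^2)/8)) *
                (t ^ (-(α/2)) * Real.exp (-(u^2)/8)) := by ring
            _ ≤ C * 61 * (t ^ (-(α/2)) * Real.exp (-(u^2)/8)) :=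
                mul_le_mul_of_nonneg_right
                  (mul_le_mul_of_nonneg_left hEc hC.le)
                  (mul_nonneg hP0.le hE8.le)
            _ = 61 * C * (t ^ (-(α/2)) * Real.exp (-(u^2)/8)) := by ring
        calc L * (u ^ α * t ^ (-(α/2))) *
            (Real.exp (-(u^2)/8) * Real.exp (-(u^2)/8)) +
            Real.exp (-(u^2)/8) * Real.exp (-(u^2)/8) * (C * u^3 / Real.sqrt t)
            ≤ 3 * L * (t ^ (-(α/2)) * Real.exp (-(u^2)/8)) +
              61 * C * (t ^ (-(α/2)) * Real.exp (-(u^2)/8)) := add_le_add t1 t2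
          _ = (3 * L + 61 * C) * t ^ (-(α/2)) * Real.exp (-(u ^ 2) / 8) := by ring
end
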